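/- arXiv:0901.1560 — 6 statements merged into one kernel-verified Lean document; each statement's English description precedes it below -/
import Mathlib

section
/- Let R be an arithmetical ring such that every finitely generated R-module has finite Goldie dimension. Then for every ideal A of R, the quotient ring R/A has only finitely many minimal prime ideals. -/
universe u

/-- A ring is *coherent* if every finitely generated ideal is finitely presented. -/
def IsCoherentRing (R : Type u) [CommRing R] : Prop :=
  ∀ I : Ideal R, I.FG → Module.FinitePresentation R I

/-- A ring is *semicoherent* if `Hom_R(E, F)` is (isomorphic to) a submodule of a flat module
for every pair of injective modules `E`, `F`. -/
def IsSemicoherentRing (R : Type u) [CommRing R] : Prop :=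
  ∀ (E F : Type u) [AddCommGroup E] [Module R E] [AddCommGroup F] [Module R F],
    Module.Injective R E → Module.Injective R F →
      ∃ G : ModuleCat.{u} R, Module.Flat R G ∧
        ∃ i : (E →ₗ[R] F) →ₗ[R] G, Function.Injective i

/-- An `R`-module `E` is *FP-injective* if `Ext¹_R(F, E) = 0` for every finitely
presented `R`-module `F`. -/
def IsFPInjective (R : Type u) [CommRing R] (E : Type u) [AddCommGroup E] [Module R E] : Prop :=
  ∀ (F : Type u) [AddCommGroup F] [Module R F], Module.FinitePresentation R F →
    Subsingleton (((Ext R (ModuleCat.{u} R) 1).obj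
      (Opposite.op (ModuleCat.of R F))).obj (ModuleCat.of R E))

/-- A ring is an *IF-ring* if every injective module over it is flat. -/
def IsIFRing (R : Type u) [CommRing R] : Prop :=
  ∀ (M : Type u) [AddCommGroup M] [Module R M], Module.Injective R M → Module.Flat R M

/-- `f : M →ₗ[R] E` exhibits `E` as an injective hull of `M`: `E` is injective and
`f` embeds `M` as an essential submodule of `E`. -/
def IsInjectiveHull (R : Type u) [CommRing R] (M E : Type u) [AddCommGroup M] [Module R M]
    [AddCommGroup E] [Module R E] (f : M →ₗ[R] E) : Prop :=
  Module.Injective R E ∧ Function.Injective f ∧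
    ∀ N : Submodule R E, N ≠ ⊥ → N ⊓ LinearMap.range f ≠ ⊥

/-- A module is indecomposable if it is nonzero and not the direct sum
of two nonzero submodules. -/
def IsIndecomposableModule (R : Type u) [CommRing R] (M : Type u) [AddCommGroup M]
    [Module R M] : Prop :=
  Nontrivial M ∧ ∀ A B : Submodule R M, IsCompl A B → A = ⊥ ∨ B = ⊥

/-- A module has *finite Goldie dimension* if its injective hull is a finite direct
sum of indecomposable injective modules. -/
def HasFiniteGoldieDimension (R : Type u) [CommRing R] (M : Type u) [AddCommGroup M]
    [Module R M] : Prop :=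
  ∃ (E : ModuleCat.{u} R) (f : M →ₗ[R] E), IsInjectiveHull R M E f ∧
    ∃ (n : ℕ) (D : Fin n → Submodule R E), DirectSum.IsInternal D ∧
      ∀ i, Module.Injective R (D i) ∧ IsIndecomposableModule R (D i)

/-- A commutative ring is a *valuation ring* (uniserial) if its ideals are totally
ordered by inclusion. -/
def IsChainRing (R : Type u) [CommRing R] : Prop :=
  ∀ I J : Ideal R, I ≤ J ∨ J ≤ I

/-- A commutative ring is *arithmetical* if all its localizations at maximal ideals are
valuation rings. -/
def IsArithmetical (R : Type u) [CommRing R] : Prop :=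
  ∀ (P : Ideal R) (hP : P.IsMaximal),
    haveI := hP.isPrime
    IsChainRing (Localization.AtPrime P)

/-- An `R`-module `M` is *finitely injective* if every homomorphism `A → M` from a finitely
generated submodule `A` of an arbitrary module `B` extends to `B`. -/
def IsFinitelyInjective (R : Type u) [CommRing R] (M : Type u) [AddCommGroup M]
    [Module R M] : Prop :=
  ∀ (B : Type u) [AddCommGroup B] [Module R B] (A : Submodule R B), A.FG →
    ∀ f : A →ₗ[R] M, ∃ g : B →ₗ[R] M, ∀ a : A, g a = f a

/-- A domain has *finite character* if every nonzero element lies in only finitely many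
maximal ideals. -/
def FiniteCharacter (R : Type u) [CommRing R] : Prop :=
  ∀ r : R, r ≠ 0 → {P : Ideal R | P.IsMaximal ∧ r ∈ P}.Finite





section Aux
variable {R : Type u} [CommRing R]

theorem exists_maximal_disjoint {M : Type u} [AddCommGroup M] [Module R M]
    (N K0 : Submodule R M) (h : Disjoint K0 N) :
    ∃ K : Submodule R M, K0 ≤ K ∧ Maximal (fun L : Submodule R M => Disjoint L N) K := by
  have hub : ∀ c ⊆ {L : Submodule R M | Disjoint L N}, IsChain (· ≤ ·) c →
      ∀ y ∈ c, ∃ ub ∈ {L : Submodule R M | Disjoint L N}, ∀ z ∈ c, z ≤ ub := by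
    intro c hc hchain y hy
    refine ⟨sSup c, ?_, fun z hz => le_sSup hz⟩
    rw [Set.mem_setOf_eq, disjoint_iff, eq_bot_iff]
    intro x hx
    obtain ⟨hx1, hx2⟩ := Submodule.mem_inf.mp hx
    obtain ⟨p, hpc, hxp⟩ :=
      (Submodule.mem_sSup_of_directed ⟨y, hy⟩ hchain.directedOn).mp hx1
    exact (hc hpc).le_bot (Submodule.mem_inf.mpr ⟨hxp, hx2⟩)
  obtain ⟨m, hm1, hm2⟩ := zorn_le_nonempty₀ _ hub K0 h
  exact ⟨m, hm1, hm2⟩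

theorem exists_proj {M : Type u} [AddCommGroup M] [Module R M]
    (p q : Submodule R M) (hdisj : Disjoint p q) :
    ∃ π : ↥(p ⊔ q) →ₗ[R] M, ∀ x : ↥(p ⊔ q), π x ∈ p ∧ (x : M) - π x ∈ q := by
  set T := p ⊔ q with hT
  set p' : Submodule R T := p.comap T.subtype with hp'
  set q' : Submodule R T := q.comap T.subtype with hq'
  have hcompl : IsCompl p' q' := by
    constructor
    · rw [disjoint_iff, eq_bot_iff]
      intro x hx
      obtain ⟨h1, h2⟩ := Submodule.mem_inf.mp hx
      have : (x : M) = 0 := hdisj.le_bot (Submodule.mem_inf.mpr ⟨h1, h2⟩)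
      rw [Submodule.mem_bot]
      exact Subtype.ext this
    · rw [codisjoint_iff, eq_top_iff]
      rintro ⟨x, hx⟩ -
      obtain ⟨a, ha, b, hb, hab⟩ := Submodule.mem_sup.mp hx
      have haT : a ∈ T := le_sup_left (α := Submodule R M) ha
      have hbT : b ∈ T := le_sup_right (α := Submodule R M) hb
      have hxe : (⟨x, hx⟩ : T) = (⟨a, haT⟩ : T) + ⟨b, hbT⟩ := by
        ext; simp [hab.symm]
      rw [hxe]
      exact Submodule.add_mem_sup ha hb
  set pr := Submodule.linearProjOfIsCompl p' q' hcompl with hpr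
  set π := T.subtype ∘ₗ p'.subtype ∘ₗ pr with hπ
  refine ⟨π, fun x => ⟨(pr x).2, ?_⟩⟩
  obtain ⟨a, ha, b, hb, hab⟩ := Submodule.mem_sup.mp
    (by rw [codisjoint_iff.mp hcompl.codisjoint]; exact Submodule.mem_top : x ∈ p' ⊔ q')
  have h1 : pr a = ⟨a, ha⟩ := Submodule.linearProjOfIsCompl_apply_left hcompl ⟨a, ha⟩
  have h2 : pr b = 0 := Submodule.linearProjOfIsCompl_apply_right' hcompl hb
  have hx' : x = a + b := hab.symm
  have hπx : π x = (a : M) := by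
    rw [hπ]
    simp only [LinearMap.comp_apply]
    rw [hx', map_add, h1, h2, add_zero]
    rfl
  rw [hπx]
  have hsub : (x : M) - a = b := by rw [← hab]; push_cast; abel
  rw [hsub]
  exact hb
theorem uniform_of_indecomposable_injective {M : Type u} [AddCommGroup M] [Module R M]
    (hinj : Module.Injective R M)
    (hind : ∀ A B : Submodule R M, IsCompl A B → A = ⊥ ∨ B = ⊥)
    (N₁ N₂ : Submodule R M) (h1 : N₁ ≠ ⊥) (h2 : N₂ ≠ ⊥) : N₁ ⊓ N₂ ≠ ⊥ := by
  intro hdisj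
  obtain ⟨K, hN₁K, hK⟩ := exists_maximal_disjoint N₂ N₁ (disjoint_iff.mpr hdisj)
  obtain ⟨H, hN₂H, hH⟩ := exists_maximal_disjoint K N₂ hK.prop.symm
  have hdKH : Disjoint K H := hH.prop.symm
  obtain ⟨π, hπ⟩ := exists_proj K H hdKH
  obtain ⟨g, hg⟩ := hinj.out (K ⊔ H).subtype (Submodule.injective_subtype _) π
  have hgK : ∀ k ∈ K, g k = k := by
    intro k hk
    have hkT : k ∈ K ⊔ H := le_sup_left (α := Submodule R M) hk
    have h1' : g k = π ⟨k, hkT⟩ := hg ⟨k, hkT⟩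
    obtain ⟨hp1, hp2⟩ := hπ ⟨k, hkT⟩
    have hmem : k - π ⟨k, hkT⟩ ∈ K := K.sub_mem hk hp1
    have hzero : k - π ⟨k, hkT⟩ = 0 :=
      (Submodule.mem_bot R).mp (hdKH.le_bot (Submodule.mem_inf.mpr ⟨hmem, hp2⟩))
    rw [h1', (sub_eq_zero.mp hzero).symm]
  have hgH : ∀ h ∈ H, g h = 0 := by
    intro h hh
    have hhT : h ∈ K ⊔ H := le_sup_right (α := Submodule R M) hh
    have h1' : g h = π ⟨h, hhT⟩ := hg ⟨h, hhT⟩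
    obtain ⟨hp1, hp2⟩ := hπ ⟨h, hhT⟩
    have hπH : π ⟨h, hhT⟩ ∈ H := by
      have he : π ⟨h, hhT⟩ = h - (h - π ⟨h, hhT⟩) := (sub_sub_cancel _ _).symm
      rw [he]; exact H.sub_mem hh hp2
    have hz : π ⟨h, hhT⟩ = 0 :=
      (Submodule.mem_bot R).mp (hdKH.le_bot (Submodule.mem_inf.mpr ⟨hp1, hπH⟩))
    rw [h1', hz]
  have hker : LinearMap.ker g = H := by
    have hd : Disjoint (LinearMap.ker g) K := by
      rw [Submodule.disjoint_def]
      intro x hx hxK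
      have h' := hgK x hxK
      rw [LinearMap.mem_ker.mp hx] at h'
      exact h'.symm
    have hHk : H ≤ LinearMap.ker g := fun x hx => LinearMap.mem_ker.mpr (hgH x hx)
    exact le_antisymm (hH.2 hd hHk) hHk
  have hKr : K ≤ LinearMap.range g := fun k hk => ⟨k, hgK k hk⟩
  have hessK : ∀ L : Submodule R M, L ≤ LinearMap.range g → L ≠ ⊥ → ¬ Disjoint L K := by
    intro L hLr hL hdLK
    obtain ⟨y, hyL, hy0⟩ := Submodule.exists_mem_ne_zero_of_ne_bot hL
    obtain ⟨x, hxy⟩ := hLr hyL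
    have hxH : x ∉ H := by
      intro hxH
      rw [← hker] at hxH
      rw [LinearMap.mem_ker.mp hxH] at hxy
      exact hy0 hxy.symm
    have hnd : ¬ Disjoint (H ⊔ Submodule.span R {x}) K := by
      intro hd
      have hle := hH.2 hd le_sup_left
      exact hxH (hle (le_sup_right (α := Submodule R M)
        (Submodule.mem_span_singleton_self x)))
    rw [Submodule.disjoint_def] at hnd
    push_neg at hnd
    obtain ⟨z, hz1, hz2, hz3⟩ := hnd
    obtain ⟨h, hh, w, hw, hhw⟩ := Submodule.mem_sup.mp hz1
    obtain ⟨r, hr⟩ := Submodule.mem_span_singleton.mp hw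
    have hgz : g z = z := hgK z hz2
    have hgz2 : g z = r • y := by
      rw [← hhw, map_add, hgH h hh, zero_add, ← hr, map_smul, hxy]
    have hzL : z ∈ L := by rw [← hgz, hgz2]; exact L.smul_mem r hyL
    exact hz3 ((Submodule.mem_bot R).mp (hdLK.le_bot (Submodule.mem_inf.mpr ⟨hzL, hz2⟩)))
  have hrange : LinearMap.range g = K := by
    have hdr : Disjoint (LinearMap.range g) N₂ := by
      rw [Submodule.disjoint_def]
      intro w hw hwN₂
      by_contra hw0
      have hnd := hessK (Submodule.span R {w})
        (by rwa [Submodule.span_singleton_le_iff_mem])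
        (by simpa [Submodule.span_singleton_eq_bot] using hw0)
      rw [Submodule.disjoint_def] at hnd
      push_neg at hnd
      obtain ⟨v, hv1, hv2, hv3⟩ := hnd
      obtain ⟨r, hr⟩ := Submodule.mem_span_singleton.mp hv1
      have hvN₂ : v ∈ N₂ := by rw [← hr]; exact N₂.smul_mem r hwN₂
      exact hv3 ((Submodule.mem_bot R).mp (hK.prop.le_bot (Submodule.mem_inf.mpr ⟨hv2, hvN₂⟩)))
    exact le_antisymm (hK.2 hdr hKr) hKr
  have hcompl : IsCompl K H := by
    constructor
    · exact hdKH
    · rw [codisjoint_iff, eq_top_iff]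
      intro x _
      have hgx : g x ∈ K := hrange ▸ LinearMap.mem_range_self g x
      have hx2 : x - g x ∈ H := by
        rw [← hker]
        have hggx : g (g x) = g x := hgK _ hgx
        simp [LinearMap.mem_ker, map_sub, hggx]
      have hxe : x = g x + (x - g x) := by abel
      rw [hxe]
      exact Submodule.add_mem_sup hgx hx2
  rcases hind K H hcompl with hKbot | hHbot
  · exact h1 (le_bot_iff.mp (hKbot ▸ hN₁K))
  · exact h2 (le_bot_iff.mp (hHbot ▸ hN₂H))
theorem no_indep_aux {M : Type u} [AddCommGroup M] [Module R M] : ∀ (n : ℕ)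
    (U : Submodule R M) (V : Fin n → Submodule R M),
    iSupIndep V → (∀ i, V i ≤ U) →
    (∀ i, ∀ N₁ N₂ : Submodule R M, N₁ ≤ V i → N₂ ≤ V i → N₁ ≠ ⊥ → N₂ ≠ ⊥ → N₁ ⊓ N₂ ≠ ⊥) →
    (∀ N : Submodule R M, N ≤ U → N ≠ ⊥ → N ⊓ (⨆ i, V i) ≠ ⊥) →
    ∀ C : Fin (n+1) → Submodule R M, iSupIndep C → (∀ j, C j ≤ U) → (∀ j, C j ≠ ⊥) →
    False := by
  intro n
  induction n with
  | zero =>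
    intro U V _ _ _ hess C _ hCU hCne
    exact hess (C 0) (hCU 0) (hCne 0) (by rw [iSup_of_empty]; exact inf_bot_eq _)
  | succ n IH =>
    intro U V hVind hVU hVuni hess C hCind hCU hCne
    set W : Submodule R M := ⨆ i : Fin n, V i.succ with hW
    have hWU : W ≤ U := iSup_le fun i => hVU i.succ
    have hSVeq : (⨆ i, V i) = V 0 ⊔ W := by
      apply le_antisymm
      · apply iSup_le
        intro i
        rcases Fin.eq_zero_or_eq_succ i with h0 | ⟨j, hj⟩
        · rw [h0]; exact le_sup_left
        · rw [hj]
          exact le_trans (le_iSup (fun i : Fin n => V i.succ) j) le_sup_right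
      · exact sup_le (le_iSup V 0) (iSup_le fun i => le_iSup V i.succ)
    have hdisj0W : Disjoint (V 0) W := by
      refine (hVind 0).mono_right ?_
      rw [hW]
      exact iSup_le fun i => le_iSup_of_le i.succ (le_iSup_of_le (Fin.succ_ne_zero i) le_rfl)
    by_cases hcase : ∀ j, C j ⊓ W ≠ ⊥
    · exact IH W (fun i => V i.succ) (hVind.comp (Fin.succ_injective n))
        (fun i => le_iSup (fun i : Fin n => V i.succ) i)
        (fun i => hVuni i.succ)
        (fun N hNW hN => by rw [← hW, inf_eq_left.mpr hNW]; exact hN)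
        (fun j => C j.castSucc ⊓ W)
        ((hCind.comp (Fin.castSucc_injective _)).mono fun j => inf_le_left)
        (fun j => inf_le_right)
        (fun j => hcase j.castSucc)
    · push_neg at hcase
      obtain ⟨j₀, hj₀⟩ := hcase
      set C₁ : Submodule R M := C j₀ ⊓ (V 0 ⊔ W) with hC₁
      have hC₁ne : C₁ ≠ ⊥ := by
        have := hess (C j₀) (hCU j₀) (hCne j₀)
        rwa [hSVeq] at this
      have hC₁W : C₁ ⊓ W = ⊥ :=
        le_bot_iff.mp (le_trans (inf_le_inf_right W inf_le_left) hj₀.le)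
      have hC₁le : C₁ ≤ V 0 ⊔ W := inf_le_right
      -- projection onto V 0 along W, domain V 0 ⊔ W
      obtain ⟨π, hπ⟩ := exists_proj (V 0) W hdisj0W
      -- the image of C₁ in V 0
      set P : Submodule R M :=
        Submodule.map π (Submodule.comap (V 0 ⊔ W).subtype C₁) with hP
      have hPle : P ≤ V 0 := by
        rintro _ ⟨x, hx, rfl⟩
        exact (hπ x).1
      have hPne : P ≠ ⊥ := by
        obtain ⟨c, hc, hc0⟩ := Submodule.exists_mem_ne_zero_of_ne_bot hC₁ne
        have hcZ : c ∈ V 0 ⊔ W := hC₁le hc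
        rw [Submodule.ne_bot_iff]
        refine ⟨π ⟨c, hcZ⟩, ⟨⟨c, hcZ⟩, hc, rfl⟩, ?_⟩
        intro h0
        have := (hπ ⟨c, hcZ⟩).2
        rw [h0, sub_zero] at this
        exact hc0 ((Submodule.mem_bot R).mp
          (hC₁W ▸ Submodule.mem_inf.mpr ⟨hc, this⟩))
      -- Z = W ⊔ C₁ is essential in V 0 ⊔ W
      have hE1 : ∀ N : Submodule R M, N ≤ V 0 ⊔ W → N ≠ ⊥ → N ⊓ (W ⊔ C₁) ≠ ⊥ := by
        intro N hNSV hNne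
        obtain ⟨x, hxN, hx0⟩ := Submodule.exists_mem_ne_zero_of_ne_bot hNne
        have hxSV : x ∈ V 0 ⊔ W := hNSV hxN
        by_cases hv : π ⟨x, hxSV⟩ = 0
        · have hxW : x ∈ W := by
            have := (hπ ⟨x, hxSV⟩).2
            rwa [hv, sub_zero] at this
          rw [Submodule.ne_bot_iff]
          exact ⟨x, Submodule.mem_inf.mpr
            ⟨hxN, le_sup_left (α := Submodule R M) hxW⟩, hx0⟩
        · have hsp : Submodule.span R {π ⟨x, hxSV⟩} ≤ V 0 := by
            rw [Submodule.span_singleton_le_iff_mem]; exact (hπ ⟨x, hxSV⟩).1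
          have hspne : Submodule.span R {π ⟨x, hxSV⟩} ≠ ⊥ := by
            simpa [Submodule.span_singleton_eq_bot] using hv
          have hmeet := hVuni 0 _ _ hsp hPle hspne hPne
          rw [Submodule.ne_bot_iff] at hmeet
          obtain ⟨y, hy, hy0⟩ := hmeet
          obtain ⟨hy1, hy2⟩ := Submodule.mem_inf.mp hy
          obtain ⟨r, hr⟩ := Submodule.mem_span_singleton.mp hy1
          obtain ⟨c, hc, hcy⟩ := hy2
          have e1 := (hπ (r • ⟨x, hxSV⟩)).2
          have e2 := (hπ c).2
          have e3 : π (r • ⟨x, hxSV⟩) = π c := by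
            rw [map_smul, hr, hcy]
          have hmemW : r • x - (c : M) ∈ W := by
            have heq : r • x - (c : M) =
                (((r • (⟨x, hxSV⟩ : ↥(V 0 ⊔ W))) : M) - π (r • ⟨x, hxSV⟩)) -
                  (((c : M)) - π c) := by
              rw [e3]; push_cast; abel
            rw [heq]; exact W.sub_mem e1 e2
          have hrx : r • x ∈ W ⊔ C₁ := by
            have heq2 : r • x = (r • x - (c : M)) + (c : M) := by abel
            rw [heq2]
            exact Submodule.add_mem_sup hmemW hc
          have hrx0 : r • x ≠ 0 := by
            intro h0
            apply hy0
            have hz : r • (⟨x, hxSV⟩ : ↥(V 0 ⊔ W)) = 0 :=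
              Subtype.ext (by simpa using h0)
            rw [← hr, ← map_smul, hz, map_zero]
          rw [Submodule.ne_bot_iff]
          exact ⟨r • x, Submodule.mem_inf.mpr ⟨N.smul_mem r hxN, hrx⟩, hrx0⟩
      -- essentiality of W ⊔ C₁ in U
      have hE2 : ∀ N : Submodule R M, N ≤ U → N ≠ ⊥ → N ⊓ (W ⊔ C₁) ≠ ⊥ := by
        intro N hNU hNne
        have h1 := hess N hNU hNne
        rw [hSVeq] at h1
        have h2 := hE1 (N ⊓ (V 0 ⊔ W)) inf_le_right h1
        intro hbot
        exact h2 (le_bot_iff.mp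
          (le_trans (inf_le_inf_right _ inf_le_left) hbot.le))
      -- projection onto W along C₁
      have hdWC : Disjoint W C₁ := by
        rw [disjoint_iff, inf_comm]
        exact hC₁W
      obtain ⟨ρ, hρ⟩ := exists_proj W C₁ hdWC
      set C' : Fin (n + 1) → Submodule R M := fun k =>
        Submodule.map ρ (Submodule.comap (W ⊔ C₁).subtype
          (C (j₀.succAbove k) ⊓ (W ⊔ C₁))) with hC'
      have hC'leW : ∀ k, C' k ≤ W := by
        rintro k _ ⟨x, hx, rfl⟩
        exact (hρ x).1
      have hC'ne : ∀ k, C' k ≠ ⊥ := by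
        intro k
        have hmeet := hE2 (C (j₀.succAbove k)) (hCU _) (hCne _)
        obtain ⟨x, hx, hx0⟩ := Submodule.exists_mem_ne_zero_of_ne_bot hmeet
        have hxZ : x ∈ W ⊔ C₁ := (Submodule.mem_inf.mp hx).2
        rw [Submodule.ne_bot_iff]
        refine ⟨ρ ⟨x, hxZ⟩, ⟨⟨x, hxZ⟩, Submodule.mem_comap.mpr (by simpa using hx), rfl⟩, ?_⟩
        intro h0
        have h2 := (hρ ⟨x, hxZ⟩).2
        rw [h0, sub_zero] at h2
        -- x ∈ C (succAbove k) ⊓ C₁ ≤ C (succAbove k) ⊓ C j₀ = ⊥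
        have hd := hCind.pairwiseDisjoint (Fin.succAbove_ne j₀ k)
        exact hx0 ((Submodule.mem_bot R).mp (hd.le_bot (Submodule.mem_inf.mpr
          ⟨(Submodule.mem_inf.mp hx).1, (inf_le_left : C₁ ≤ C j₀) h2⟩)))
      have hC'ind : iSupIndep C' := by
        intro k
        rw [disjoint_iff, eq_bot_iff]
        intro z hz
        obtain ⟨hz1, hz2⟩ := Submodule.mem_inf.mp hz
        obtain ⟨x, hx, hxz⟩ := hz1
        have hz2' : z ∈ Submodule.map ρ (⨆ (l) (_ : l ≠ k),
            Submodule.comap (W ⊔ C₁).subtype (C (j₀.succAbove l) ⊓ (W ⊔ C₁))) := by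
          simp only [Submodule.map_iSup] at hz2 ⊢
          exact hz2
        obtain ⟨a, ha, haz⟩ := hz2'
        have haM : (a : M) ∈ ⨆ (l) (_ : l ≠ k), C (j₀.succAbove l) := by
          have hle : Submodule.map (W ⊔ C₁).subtype (⨆ (l) (_ : l ≠ k),
              Submodule.comap (W ⊔ C₁).subtype (C (j₀.succAbove l) ⊓ (W ⊔ C₁))) ≤
              ⨆ (l) (_ : l ≠ k), C (j₀.succAbove l) := by
            simp only [Submodule.map_iSup]
            refine iSup_mono fun l => iSup_mono fun _ => ?_
            intro x hx
            rw [Submodule.map_comap_subtype] at hx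
            exact (Submodule.mem_inf.mp (Submodule.mem_inf.mp hx).2).1
          exact hle ⟨a, ha, rfl⟩
        -- ρ x = ρ a hence x - a ∈ C₁
        have hxa : (x : M) - (a : M) ∈ C₁ := by
          have h2 := (hρ (x - a)).2
          rw [map_sub, hxz, haz, sub_self, sub_zero] at h2
          exact h2
        have hbig : (x : M) ∈ ⨆ (j) (_ : j ≠ j₀.succAbove k), C j := by
          have hxeq : (x : M) = ((x : M) - (a : M)) + (a : M) := by abel
          rw [hxeq]
          apply Submodule.add_mem
          · have hle1 : C₁ ≤ ⨆ (j) (_ : j ≠ j₀.succAbove k), C j :=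
              le_iSup_of_le j₀ (le_iSup_of_le (Ne.symm (Fin.succAbove_ne j₀ k))
                inf_le_left)
            exact hle1 hxa
          · have hle2 : (⨆ (l) (_ : l ≠ k), C (j₀.succAbove l)) ≤
                ⨆ (j) (_ : j ≠ j₀.succAbove k), C j :=
              iSup₂_le fun l hl => le_iSup_of_le (j₀.succAbove l)
                (le_iSup_of_le (fun hEq => hl (Fin.succAbove_right_injective (p := j₀) hEq))
                  le_rfl)
            exact hle2 haM
        have hxC : (x : M) ∈ C (j₀.succAbove k) := by
          have := Submodule.mem_comap.mp hx
          exact (Submodule.mem_inf.mp this).1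
        have hx0 : (x : M) = 0 := (Submodule.mem_bot R).mp
          ((hCind (j₀.succAbove k)).le_bot (Submodule.mem_inf.mpr ⟨hxC, hbig⟩))
        rw [Submodule.mem_bot, ← hxz, show x = 0 from Subtype.ext hx0, map_zero]
      exact IH W (fun i => V i.succ) (hVind.comp (Fin.succ_injective n))
        (fun i => le_iSup (fun i : Fin n => V i.succ) i)
        (fun i => hVuni i.succ)
        (fun N hNW hN => by
          rw [show (⨆ i : Fin n, V i.succ) = W from hW.symm, inf_eq_left.mpr hNW]
          exact hN)
        C' hC'ind hC'leW hC'ne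
theorem goldie_bound {M : Type u} [AddCommGroup M] [Module R M]
    (h : HasFiniteGoldieDimension R M) :
    ∃ n : ℕ, ∀ C : Fin (n + 1) → Submodule R M, iSupIndep C → ∃ j, C j = ⊥ := by
  obtain ⟨E, f, ⟨hEinj, hfinj, hess⟩, n, D, hD, hDprop⟩ := h
  refine ⟨n, fun C hC => ?_⟩
  by_contra hne
  push_neg at hne
  set C' : Fin (n + 1) → Submodule R E := fun j => Submodule.map f (C j) with hC'
  have hC'ne : ∀ j, C' j ≠ ⊥ := by
    intro j hbot
    apply hne j
    rw [eq_bot_iff]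
    intro x hx
    have hfx : f x ∈ C' j := Submodule.mem_map_of_mem hx
    rw [hbot, Submodule.mem_bot] at hfx
    rw [Submodule.mem_bot]
    exact hfinj (by rw [hfx, map_zero])
  have hC'ind : iSupIndep C' := by
    intro j
    rw [disjoint_iff]
    have hmi : C' j ⊓ (⨆ (l) (_ : l ≠ j), C' l) =
        Submodule.map f (C j ⊓ ⨆ (l) (_ : l ≠ j), C l) := by
      rw [Submodule.map_inf _ hfinj]
      simp only [Submodule.map_iSup]
      rfl
    rw [hmi, disjoint_iff.mp (hC j), Submodule.map_bot]
  have hDuni : ∀ i, ∀ N₁ N₂ : Submodule R E,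
      N₁ ≤ D i → N₂ ≤ D i → N₁ ≠ ⊥ → N₂ ≠ ⊥ → N₁ ⊓ N₂ ≠ ⊥ := by
    intro i N₁ N₂ h1 h2 hn1 hn2 hbot
    obtain ⟨hinj, _, hind⟩ := hDprop i
    have hcne : ∀ N : Submodule R E, N ≤ D i → N ≠ ⊥ →
        N.comap (D i).subtype ≠ ⊥ := by
      intro N hle hN
      obtain ⟨x, hx, hx0⟩ := Submodule.exists_mem_ne_zero_of_ne_bot hN
      rw [Submodule.ne_bot_iff]
      exact ⟨⟨x, hle hx⟩, hx, fun hq => hx0 (by simpa [Subtype.ext_iff] using hq)⟩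
    apply uniform_of_indecomposable_injective hinj hind
      (N₁.comap (D i).subtype) (N₂.comap (D i).subtype)
      (hcne N₁ h1 hn1) (hcne N₂ h2 hn2)
    rw [← Submodule.comap_inf, hbot, Submodule.comap_bot, Submodule.ker_subtype]
  exact no_indep_aux n ⊤ D hD.submodule_iSupIndep (fun i => le_top) hDuni
    (fun N _ hN => by rw [hD.submodule_iSup_eq_top, inf_top_eq]; exact hN)
    C' hC'ind (fun j => le_top) hC'ne
theorem exists_orth_pair {T : Type u} [CommRing T] {P Q : Ideal T}
    (hP : P ∈ minimalPrimes T) (hQ : Q ∈ minimalPrimes T) (hne : P ≠ Q) :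
    ∃ x y : T, x ∉ P ∧ y ∉ Q ∧ x * y = 0 := by
  have hPp : P.IsPrime := hP.1.1
  have hQp : Q.IsPrime := hQ.1.1
  have hQP : ¬ Q ≤ P := by
    intro hle
    exact hne (le_antisymm (hP.2 ⟨hQp, bot_le⟩ hle) hle)
  obtain ⟨t, htQ, htP⟩ := SetLike.not_le_iff_exists.mp hQP
  haveI := hQp
  have hnil : IsNilpotent (algebraMap T (Localization Q.primeCompl) t) := by
    rw [nilpotent_iff_mem_prime]
    intro J hJ
    have hsub := IsLocalization.subsingleton_primeSpectrum_of_mem_minimalPrimes Q hQ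
      (Localization Q.primeCompl)
    have hJeq : J = IsLocalRing.maximalIdeal _ := congrArg PrimeSpectrum.asIdeal
      (hsub.elim ⟨J, hJ⟩ ⟨_, (IsLocalRing.maximalIdeal.isMaximal _).isPrime⟩)
    rw [hJeq]
    exact (IsLocalization.AtPrime.to_map_mem_maximal_iff _ Q t).mpr htQ
  obtain ⟨k, hk⟩ := hnil
  rw [← map_pow] at hk
  obtain ⟨s, hs⟩ := (IsLocalization.map_eq_zero_iff Q.primeCompl _ _).mp hk
  refine ⟨t ^ k, s, ?_, s.2, ?_⟩
  · exact fun hmem => htP (hPp.mem_of_pow_mem _ hmem)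
  · rw [mul_comm]; exact hs
theorem exists_orth_family {T : Type u} [CommRing T] {m : ℕ}
    (P : Fin m → Ideal T) (hPmem : ∀ i, P i ∈ minimalPrimes T)
    (hPinj : Function.Injective P) :
    ∃ x : Fin m → T, (∀ i, x i ∉ P i) ∧ ∀ i j, i ≠ j → x i * x j = 0 := by
  have hpair : ∀ i j : Fin m, i ≠ j → ∃ uv : T × T,
      uv.1 ∉ P i ∧ uv.2 ∉ P j ∧ uv.1 * uv.2 = 0 := by
    intro i j hij
    obtain ⟨u, v, h1, h2, h3⟩ := exists_orth_pair (hPmem i) (hPmem j)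
      (fun h => hij (hPinj h))
    exact ⟨(u, v), h1, h2, h3⟩
  choose F hF1 hF2 hF3 using hpair
  set g : Fin m → Fin m → T := fun i j =>
    if hij : i = j then 1
    else if i < j then (F i j hij).1 else (F j i (Ne.symm hij)).2 with hg
  have hgP : ∀ i j, i ≠ j → g i j ∉ P i := by
    intro i j hij
    rw [hg]
    simp only
    rw [dif_neg hij]
    by_cases hlt : i < j
    · rw [if_pos hlt]; exact hF1 i j hij
    · rw [if_neg hlt]; exact hF2 j i (Ne.symm hij)
  have hgmul : ∀ i j, i ≠ j → g i j * g j i = 0 := by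
    intro i j hij
    rw [hg]
    simp only
    rw [dif_neg hij, dif_neg (Ne.symm hij)]
    rcases hij.lt_or_gt with hlt | hgt
    · rw [if_pos hlt, if_neg (not_lt_of_gt hlt)]
      exact hF3 i j hij
    · rw [if_neg (not_lt_of_gt hgt), if_pos hgt, mul_comm]
      exact hF3 j i (Ne.symm hij)
  refine ⟨fun i => ∏ j ∈ Finset.univ.erase i, g i j, ?_, ?_⟩
  · intro i hmem
    haveI := (hPmem i).1.1
    obtain ⟨j, hj, hjP⟩ := (Ideal.IsPrime.prod_mem_iff).mp hmem
    exact hgP i j (Finset.ne_of_mem_erase hj).symm hjP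
  · intro i j hij
    have hji : j ∈ Finset.univ.erase i :=
      Finset.mem_erase.mpr ⟨Ne.symm hij, Finset.mem_univ j⟩
    have hij' : i ∈ Finset.univ.erase j :=
      Finset.mem_erase.mpr ⟨hij, Finset.mem_univ i⟩
    show (∏ l ∈ Finset.univ.erase i, g i l) * (∏ l ∈ Finset.univ.erase j, g j l) = 0
    rw [← Finset.mul_prod_erase _ _ hji, ← Finset.mul_prod_erase _ _ hij']
    calc g i j * (∏ l ∈ (Finset.univ.erase i).erase j, g i l) *
          (g j i * ∏ l ∈ (Finset.univ.erase j).erase i, g j l)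
        = g i j * g j i * ((∏ l ∈ (Finset.univ.erase i).erase j, g i l) *
            ∏ l ∈ (Finset.univ.erase j).erase i, g j l) := by ring
      _ = 0 := by rw [hgmul i j hij, zero_mul]
end Aux

/-- Let `R` be an arithmetical ring such that every finitely generated
module has finite Goldie dimension.  Then `R/A` has only finitely many minimal primes, for
every ideal `A` of `R`. -/
theorem minimalPrimes_quotient_finite (R : Type u) [CommRing R]
    (harith : IsArithmetical R)
    (hb : ∀ (M : Type u) [AddCommGroup M] [Module R M],
      Module.Finite R M → HasFiniteGoldieDimension R M)
    (A : Ideal R) :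
    (minimalPrimes (R ⧸ A)).Finite := by
  classical
  set S := R ⧸ A
  set T := S ⧸ nilradical S with hT
  haveI hred : IsReduced T :=
    (Ideal.isRadical_iff_quotient_reduced (nilradical S)).mp
      (Ideal.radical_isRadical (0 : Ideal S))
  -- transfer to T
  have himg : minimalPrimes S =
      Ideal.comap (Ideal.Quotient.mk (nilradical S)) '' minimalPrimes T := by
    have h1 := Ideal.minimalPrimes_eq_comap (I := nilradical S)
    have h2 : (nilradical S).minimalPrimes = minimalPrimes S := by
      show ((0 : Ideal S).radical).minimalPrimes = minimalPrimes S
      rw [Ideal.radical_minimalPrimes]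
      rfl
    rw [← h2, h1]
  suffices hTfin : (minimalPrimes T).Finite by
    rw [show minimalPrimes (R ⧸ A) = minimalPrimes S from rfl, himg]
    exact hTfin.image _
  -- T is a finite R-module
  have hsurj : Function.Surjective (algebraMap R T) := by
    intro t
    obtain ⟨s, rfl⟩ := Ideal.Quotient.mk_surjective t
    obtain ⟨r, rfl⟩ := Ideal.Quotient.mk_surjective s
    exact ⟨r, by
      rw [IsScalarTower.algebraMap_apply R S T, Ideal.Quotient.algebraMap_eq,
        Ideal.Quotient.algebraMap_eq]⟩
  haveI hfin : Module.Finite R T :=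
    Module.Finite.of_surjective (Algebra.linearMap R T) hsurj
  obtain ⟨n, hn⟩ := goldie_bound (hb T hfin)
  by_contra hinf
  obtain ⟨tset, htsub, htcard⟩ :=
    Set.Infinite.exists_subset_card_eq (s := minimalPrimes T) hinf (n + 1)
  obtain ⟨P, hPinj, hPmem⟩ : ∃ P : Fin (n + 1) → Ideal T,
      Function.Injective P ∧ ∀ i, P i ∈ minimalPrimes T := by
    have e : ↥tset ≃ Fin (n + 1) := htcard ▸ tset.equivFin
    refine ⟨fun i => (e.symm i : Ideal T),
      fun i j h => e.symm.injective (Subtype.coe_injective h),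
      fun i => htsub (e.symm i).2⟩
  obtain ⟨x, hx1, hx2⟩ := exists_orth_family P hPmem hPinj
  set Cfam : Fin (n + 1) → Submodule R T := fun i => Submodule.span R {x i} with hCfam
  have hCne : ∀ i, Cfam i ≠ ⊥ := by
    intro i h0
    rw [hCfam] at h0
    simp only [Submodule.span_singleton_eq_bot] at h0
    exact hx1 i (h0 ▸ (P i).zero_mem)
  have hCind : iSupIndep Cfam := by
    intro i
    rw [disjoint_iff, eq_bot_iff]
    intro z hz
    obtain ⟨hz1, hz2⟩ := Submodule.mem_inf.mp hz
    obtain ⟨r, hr⟩ := Submodule.mem_span_singleton.mp hz1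
    have hzx : z * x i = 0 := by
      have hsup : (⨆ (l) (_ : l ≠ i), Cfam l) ≤
          LinearMap.ker (LinearMap.mulRight R (x i)) := by
        refine iSup₂_le fun l hl => ?_
        rw [hCfam, Submodule.span_le]
        intro w hw
        rw [Set.mem_singleton_iff] at hw
        subst hw
        rw [SetLike.mem_coe, LinearMap.mem_ker, LinearMap.mulRight_apply]
        exact hx2 l i hl
      exact LinearMap.mem_ker.mp (hsup hz2)
    have hz0 : z * z = 0 := by
      have h1 : z * z = r • (x i * z) := by rw [← hr, smul_mul_assoc]
      rw [h1, mul_comm (x i) z, hzx, smul_zero]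
    have hznil : IsNilpotent z := ⟨2, by rw [pow_two]; exact hz0⟩
    rw [Submodule.mem_bot]
    exact hznil.eq_zero
  obtain ⟨j, hj⟩ := hn Cfam hCind
  exact hCne j hj
end

section
/- Let R be a reduced commutative ring which has finite Goldie dimension as a module over itself. Then R has only finitely many minimal prime ideals. -/
universe u

section GoldieAux

variable {R : Type u} [CommRing R]

section ModuleAux

variable {E : Type u} [AddCommGroup E] [Module R E]

/-- `A` is an essential submodule of `B` (elementwise formulation). -/
def EssIn (A B : Submodule R E) : Prop :=
  A ≤ B ∧ ∀ x ∈ B, x ≠ 0 → ∃ r : R, r • x ∈ A ∧ r • x ≠ 0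

lemma essIn_refl (A : Submodule R E) : EssIn A A :=
  ⟨le_rfl, fun x hx h0 => ⟨1, by simpa using hx, by simpa using h0⟩⟩

lemma EssIn.trans {A B C : Submodule R E} (h1 : EssIn A B) (h2 : EssIn B C) :
    EssIn A C := by
  refine ⟨h1.1.trans h2.1, fun x hx h0 => ?_⟩
  obtain ⟨r, hr, hr0⟩ := h2.2 x hx h0
  obtain ⟨s, hs, hs0⟩ := h1.2 _ hr hr0
  exact ⟨s * r, by rwa [mul_smul], by rwa [mul_smul]⟩

lemma EssIn.eq_bot_of_inf_eq_bot {A B C : Submodule R E} (h : EssIn A B) (hC : C ≤ B)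
    (hdisj : C ⊓ A = ⊥) : C = ⊥ := by
  by_contra hne
  obtain ⟨x, hxC, hx0⟩ := (Submodule.ne_bot_iff _).mp hne
  obtain ⟨r, hr, hr0⟩ := h.2 x (hC hxC) hx0
  have : r • x ∈ C ⊓ A := ⟨Submodule.smul_mem _ _ hxC, hr⟩
  rw [hdisj] at this
  exact hr0 this

lemma essIn_sup {A₁ A₂ V₁ V₂ : Submodule R E} (h1 : EssIn A₁ V₁) (h2 : EssIn A₂ V₂)
    (hd : V₁ ⊓ V₂ = ⊥) : EssIn (A₁ ⊔ A₂) (V₁ ⊔ V₂) := by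
  refine ⟨sup_le_sup h1.1 h2.1, fun x hx h0 => ?_⟩
  obtain ⟨v₁, hv₁, v₂, hv₂, rfl⟩ := Submodule.mem_sup.mp hx
  by_cases hv10 : v₁ = 0
  · subst hv10
    rw [zero_add] at h0 ⊢
    obtain ⟨r, hr, hr0⟩ := h2.2 v₂ hv₂ h0
    exact ⟨r, Submodule.mem_sup_right hr, hr0⟩
  · obtain ⟨r, hr, hr0⟩ := h1.2 v₁ hv₁ hv10
    by_cases hrv2 : r • v₂ = 0
    · refine ⟨r, ?_, ?_⟩
      · rw [smul_add, hrv2, add_zero]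
        exact Submodule.mem_sup_left hr
      · rw [smul_add, hrv2, add_zero]
        exact hr0
    · obtain ⟨s, hs, hs0⟩ := h2.2 (r • v₂) (Submodule.smul_mem _ _ hv₂) hrv2
      refine ⟨s * r, ?_, ?_⟩
      · rw [mul_smul, smul_add, smul_add]
        exact Submodule.add_mem_sup (Submodule.smul_mem _ _ hr) hs
      · intro hzero
        rw [mul_smul, smul_add, smul_add] at hzero
        have : s • r • v₂ ∈ V₁ ⊓ V₂ := by
          constructor
          · have : s • r • v₁ ∈ V₁ := Submodule.smul_mem _ _ (h1.1 hr)
            have heq : s • r • v₂ = -(s • r • v₁) := by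
              rw [eq_neg_iff_add_eq_zero, add_comm]; exact hzero
            rw [heq]; exact Submodule.neg_mem _ this
          · exact h2.1 hs
        rw [hd] at this
        exact hs0 this

lemma essIn_biSup {ι : Type} [DecidableEq ι] {V S : ι → Submodule R E}
    (hind : iSupIndep V) (hS : ∀ i, EssIn (S i) (V i)) (t : Finset ι) :
    EssIn (⨆ i ∈ t, S i) (⨆ i ∈ t, V i) := by
  classical
  induction t using Finset.induction_on with
  | empty => simpa using essIn_refl (⊥ : Submodule R E)
  | @insert a t ha ih =>
      rw [Finset.iSup_insert, Finset.iSup_insert]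
      refine essIn_sup (hS a) ih ?_
      have hle : (⨆ i ∈ t, V i) ≤ ⨆ (j) (_ : j ≠ a), V j := by
        refine iSup₂_le fun i hi => ?_
        exact le_iSup₂ (f := fun (j : ι) (_ : j ≠ a) => V j) i (fun h => ha (h ▸ hi))
      exact ((hind a).mono_right hle).eq_bot

lemma no_indep_family (n : ℕ) (V : Fin n → Submodule R E)
    (hVind : iSupIndep V) (hVtop : ⨆ i, V i = ⊤)
    (hVuni : ∀ i, ∀ A B : Submodule R E, A ≤ V i → B ≤ V i → A ≠ ⊥ → B ≠ ⊥ → A ⊓ B ≠ ⊥)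
    (hVne : ∀ i, V i ≠ ⊥)
    (N : Fin (n + 1) → Submodule R E)
    (hNind : iSupIndep N) (hNne : ∀ k, N k ≠ ⊥) : False := by
  classical
  rcases Nat.eq_zero_or_pos n with hn | hn
  · subst hn
    have htop : (⊤ : Submodule R E) = ⊥ := by rw [← hVtop]; exact iSup_of_empty V
    exact hNne 0 (le_bot_iff.mp (htop ▸ le_top))
  have hinh : Nonempty (Fin n) := ⟨⟨0, hn⟩⟩
  set P : ℕ → Prop := fun t => ∃ (K : Finset (Fin (n+1))) (σ : Fin (n+1) → Fin n),
    K.card + t = n + 1 ∧ Set.InjOn σ ↑(Kᶜ) ∧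
    iSupIndep (fun k => if k ∈ K then N k else V (σ k)) with hPdef
  have step : ∀ t, t ≤ n → P t → P (t+1) := by
    intro t ht hPt
    obtain ⟨K, σ, hcard, hinj, hind⟩ := hPt
    have hKne : K.Nonempty := Finset.card_pos.mp (by omega)
    obtain ⟨k₀, hk₀⟩ := hKne
    set H : Fin (n+1) → Submodule R E := fun k => if k ∈ K then N k else V (σ k) with hH
    set W : Submodule R E := ⨆ (j) (_ : j ≠ k₀), H j with hW
    have hdis : H k₀ ⊓ W = ⊥ := (hind k₀).eq_bot
    have hHk₀ : H k₀ = N k₀ := by simp [hH, hk₀]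
    rw [hHk₀] at hdis
    -- find an index i₀ with V i₀ ⊓ W = ⊥
    have hex : ∃ i, V i ⊓ W = ⊥ := by
      by_contra hc
      push_neg at hc
      have hSess : ∀ i, EssIn (V i ⊓ W) (V i) := by
        intro i
        refine ⟨inf_le_left, fun x hx h0 => ?_⟩
        have hspan : Submodule.span R {x} ≠ ⊥ := by
          simpa [Submodule.span_singleton_eq_bot] using h0
        have hne := hVuni i (Submodule.span R {x}) (V i ⊓ W)
          ((Submodule.span_singleton_le_iff_mem x _).mpr hx) inf_le_left hspan (hc i)
        obtain ⟨y, hy, hy0⟩ := (Submodule.ne_bot_iff _).mp hne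
        obtain ⟨r, rfl⟩ := Submodule.mem_span_singleton.mp hy.1
        exact ⟨r, hy.2, hy0⟩
      have hbig := essIn_biSup hVind hSess Finset.univ
      have htop : (⨆ i ∈ Finset.univ, V i) = ⊤ := by
        rw [← hVtop]; simp
      rw [htop] at hbig
      have hSle : (⨆ i ∈ Finset.univ, V i ⊓ W) ≤ W := iSup₂_le fun i _ => inf_le_right
      have hinf : N k₀ ⊓ (⨆ i ∈ Finset.univ, V i ⊓ W) = ⊥ :=
        le_bot_iff.mp ((inf_le_inf_left _ hSle).trans hdis.le)
      exact hNne k₀ (hbig.eq_bot_of_inf_eq_bot le_top hinf)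
    obtain ⟨i₀, hi₀⟩ := hex
    have hi₀new : ∀ k, k ∉ K → σ k ≠ i₀ := by
      intro k hk hsk
      have hkk₀ : k ≠ k₀ := fun h => hk (h ▸ hk₀)
      have hHkW : H k ≤ W := le_iSup₂ (f := fun j (_ : j ≠ k₀) => H j) k hkk₀
      have hHk : H k = V (σ k) := by simp [hH, hk]
      have hle : V i₀ ≤ W := by rw [← hsk, ← hHk]; exact hHkW
      exact hVne i₀ (by rw [← hi₀, inf_eq_left.mpr hle])
    refine ⟨K.erase k₀, Function.update σ k₀ i₀, ?_, ?_, ?_⟩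
    · have := Finset.card_erase_of_mem hk₀
      have := Finset.card_pos.mpr ⟨k₀, hk₀⟩
      omega
    · intro a ha b hb hab
      simp only [Finset.coe_compl, Set.mem_compl_iff, Finset.mem_coe, Finset.mem_erase,
        not_and] at ha hb
      by_cases hak : a = k₀ <;> by_cases hbk : b = k₀
      · rw [hak, hbk]
      · exfalso
        have hbK : b ∉ K := hb hbk
        subst hak
        rw [Function.update_self, Function.update_of_ne hbk] at hab
        exact hi₀new b hbK hab.symm
      · exfalso
        have haK : a ∉ K := ha hak
        subst hbk
        rw [Function.update_self, Function.update_of_ne hak] at hab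
        exact hi₀new a haK hab
      · have haK : a ∉ K := ha hak
        have hbK : b ∉ K := hb hbk
        rw [Function.update_of_ne hak, Function.update_of_ne hbk] at hab
        exact hinj (by simpa using haK) (by simpa using hbK) hab
    · set H' : Fin (n+1) → Submodule R E :=
        fun k => if k ∈ K.erase k₀ then N k else V (Function.update σ k₀ i₀ k) with hH'
      have hH'k₀ : H' k₀ = V i₀ := by
        simp [hH']
      have hH'eq : ∀ k, k ≠ k₀ → H' k = H k := by
        intro k hk
        by_cases hkK : k ∈ K
        · simp [hH', hH, Finset.mem_erase, hk, hkK]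
        · simp [hH', hH, Finset.mem_erase, hk, hkK, Function.update_of_ne hk]
      intro k
      rw [disjoint_iff]
      by_cases hkk₀ : k = k₀
      · subst hkk₀
        have hsupW : (⨆ (j) (_ : j ≠ k), H' j) = W := by
          rw [hW]
          refine iSup_congr fun j => ?_
          by_cases hj : j = k
          · simp [hj]
          · simp only [hH'eq j hj]
        rw [hH'k₀, hsupW]
        exact hi₀
      · set U : Submodule R E := ⨆ (j) (_ : j ≠ k ∧ j ≠ k₀), H j with hU
        have hUW : U ≤ W :=
          iSup₂_le fun j hj => le_iSup₂ (f := fun j (_ : j ≠ k₀) => H j) j hj.2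
        have hUk : U ≤ ⨆ (j) (_ : j ≠ k), H j :=
          iSup₂_le fun j hj => le_iSup₂ (f := fun j (_ : j ≠ k) => H j) j hj.1
        have hHkW : H k ≤ W := le_iSup₂ (f := fun j (_ : j ≠ k₀) => H j) k hkk₀
        have hsup : (⨆ (j) (_ : j ≠ k), H' j) ≤ V i₀ ⊔ U := by
          refine iSup₂_le fun j hj => ?_
          by_cases hjk₀ : j = k₀
          · subst hjk₀; rw [hH'k₀]; exact le_sup_left
          · rw [hH'eq j hjk₀]
            exact (le_iSup₂ (f := fun j (_ : j ≠ k ∧ j ≠ k₀) => H j) j ⟨hj, hjk₀⟩).trans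
              le_sup_right
        rw [hH'eq k hkk₀]
        rw [eq_bot_iff]
        rintro x ⟨hx1, hx2⟩
        have hx2' : x ∈ V i₀ ⊔ U := hsup hx2
        obtain ⟨v, hv, u, hu, rfl⟩ := Submodule.mem_sup.mp hx2'
        have hvW : v ∈ V i₀ ⊓ W := by
          refine ⟨hv, ?_⟩
          have : v = (v + u) - u := by abel
          rw [this]
          exact Submodule.sub_mem _ (hHkW hx1) (hUW hu)
        rw [hi₀] at hvW
        have hv0 : v = 0 := hvW
        subst hv0
        rw [zero_add] at hx1 ⊢
        have : u ∈ H k ⊓ ⨆ (j) (_ : j ≠ k), H j := ⟨hx1, hUk hu⟩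
        rw [(hind k).eq_bot] at this
        exact this
  have key : ∀ t, t ≤ n + 1 → P t := by
    intro t
    induction t with
    | zero =>
        intro _
        refine ⟨Finset.univ, fun _ => Classical.arbitrary _, by simp, by simp, ?_⟩
        have heq : (fun k => if k ∈ (Finset.univ : Finset (Fin (n+1))) then N k
            else V (Classical.arbitrary _)) = N := by
          funext k; simp
        rw [heq]
        exact hNind
    | succ t ih => intro ht; exact step t (by omega) (ih (by omega))
  obtain ⟨K, σ, hcard, hinj, _⟩ := key (n+1) le_rfl
  have hK : K = ∅ := Finset.card_eq_zero.mp (by omega)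
  subst hK
  have hσ : Function.Injective σ := fun a b hab => hinj (by simp) (by simp) hab
  have := Fintype.card_le_of_injective σ hσ
  simp only [Fintype.card_fin] at this
  omega


end ModuleAux

theorem uniform_of_injective_indecomposable
    (M : Type u) [AddCommGroup M] [Module R M]
    (hinj : Module.Injective R M) (hind : IsIndecomposableModule R M)
    (A B : Submodule R M) (hA : A ≠ ⊥) (hB : B ≠ ⊥) : A ⊓ B ≠ ⊥ := by
  intro hAB
  classical
  -- Zorn 1: maximal essential extension H of A
  set S₁ : Set (Submodule R M) := {H | EssIn A H} with hS₁
  have hchain1 : ∀ c ⊆ S₁, IsChain (· ≤ ·) c → ∀ y ∈ c, ∃ ub ∈ S₁, ∀ z ∈ c, z ≤ ub := by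
    intro c hcS hchain y hy
    refine ⟨sSup c, ⟨((hcS hy).1).trans (le_sSup hy), ?_⟩, fun z hz => le_sSup hz⟩
    intro x hx hx0
    obtain ⟨p, hpc, hxp⟩ := (Submodule.mem_sSup_of_directed ⟨y, hy⟩ hchain.directedOn).mp hx
    exact (hcS hpc).2 x hxp hx0
  obtain ⟨H, hAH, hHmax⟩ := zorn_le_nonempty₀ S₁ hchain1 A (essIn_refl A)
  have hHS : EssIn A H := hHmax.prop
  have hBH : B ⊓ H = ⊥ := by
    rw [eq_bot_iff]
    rintro x ⟨hxB, hxH⟩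
    rw [Submodule.mem_bot]
    by_contra hx0
    obtain ⟨r, hrA, hr0⟩ := hHS.2 x hxH hx0
    have : r • x ∈ A ⊓ B := ⟨hrA, Submodule.smul_mem _ _ hxB⟩
    rw [hAB] at this
    exact hr0 this
  -- Zorn 2: K maximal with B ≤ K and H ⊓ K = ⊥
  set S₂ : Set (Submodule R M) := {K | B ≤ K ∧ H ⊓ K = ⊥} with hS₂
  have hchain2 : ∀ c ⊆ S₂, IsChain (· ≤ ·) c → ∀ y ∈ c, ∃ ub ∈ S₂, ∀ z ∈ c, z ≤ ub := by
    intro c hcS hchain y hy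
    refine ⟨sSup c, ⟨((hcS hy).1).trans (le_sSup hy), ?_⟩, fun z hz => le_sSup hz⟩
    rw [eq_bot_iff]
    rintro x ⟨hxH, hxs⟩
    obtain ⟨p, hpc, hxp⟩ := (Submodule.mem_sSup_of_directed ⟨y, hy⟩ hchain.directedOn).mp hxs
    have : x ∈ H ⊓ p := ⟨hxH, hxp⟩
    rw [(hcS hpc).2] at this
    exact this
  obtain ⟨K, hBK, hKmax⟩ := zorn_le_nonempty₀ S₂ hchain2 B
    ⟨le_rfl, by rw [inf_comm]; exact hBH⟩
  have hKS : B ≤ K ∧ H ⊓ K = ⊥ := hKmax.prop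
  -- H ⊔ K is essential in M
  have hHK_ess : ∀ x : M, x ≠ 0 → ∃ r : R, r • x ∈ H ⊔ K ∧ r • x ≠ 0 := by
    intro x hx0
    by_contra hcon
    push_neg at hcon
    have hK' : K ⊔ Submodule.span R {x} ∈ S₂ := by
      refine ⟨hKS.1.trans le_sup_left, ?_⟩
      rw [eq_bot_iff]
      rintro y ⟨hyH, hyK⟩
      obtain ⟨k, hk, z, hz, rfl⟩ := Submodule.mem_sup.mp hyK
      obtain ⟨r, rfl⟩ := Submodule.mem_span_singleton.mp hz
      have hrx : r • x ∈ H ⊔ K := by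
        have heq : r • x = (k + r • x) - k := by abel
        rw [heq]
        exact Submodule.sub_mem _ (Submodule.mem_sup_left hyH) (Submodule.mem_sup_right hk)
      have h0 : r • x = 0 := hcon r hrx
      rw [h0, add_zero] at hyH ⊢
      have : k ∈ H ⊓ K := ⟨hyH, hk⟩
      rw [hKS.2] at this
      exact this
    have hxK : x ∈ K := (hKmax.2 hK' le_sup_left)
      (Submodule.mem_sup_right (Submodule.mem_span_singleton_self x))
    have := hcon 1 (by simpa using Submodule.mem_sup_right hxK)
    rw [one_smul] at this
    exact hx0 this
  -- build the projection
  set L : Submodule R M := H ⊔ K with hL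
  set H' : Submodule R ↥L := H.comap L.subtype with hH'
  set K' : Submodule R ↥L := K.comap L.subtype with hK'
  have hcompl : IsCompl H' K' := by
    constructor
    · rw [disjoint_iff, eq_bot_iff]
      rintro z ⟨hz1, hz2⟩
      have hz : (z : M) ∈ H ⊓ K := ⟨hz1, hz2⟩
      rw [hKS.2] at hz
      exact (Submodule.mem_bot _).mpr (Subtype.ext (by simpa using hz))
    · rw [codisjoint_iff, eq_top_iff]
      rintro z -
      obtain ⟨h, hh, k, hk, hz⟩ := Submodule.mem_sup.mp z.2
      refine Submodule.mem_sup.mpr ⟨⟨h, Submodule.mem_sup_left hh⟩, hh,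
        ⟨k, Submodule.mem_sup_right hk⟩, hk, ?_⟩
      exact Subtype.ext (by simpa using hz)
  set pr : ↥L →ₗ[R] M :=
    L.subtype.comp ((H'.subtype).comp (Submodule.projectionOnto H' K' hcompl)) with hpr
  obtain ⟨π, hπ⟩ := hinj.out L.subtype (Submodule.injective_subtype L) pr
  have hπH : ∀ h ∈ H, π h = h := by
    intro h hh
    have hzH' : (⟨h, Submodule.mem_sup_left hh⟩ : ↥L) ∈ H' := hh
    have := hπ ⟨h, Submodule.mem_sup_left hh⟩
    rw [hpr] at this
    simpa [Submodule.projectionOnto_apply_of_mem_left hcompl hzH'] using this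
  have hπK : ∀ k ∈ K, π k = 0 := by
    intro k hk
    have hzK' : (⟨k, Submodule.mem_sup_right hk⟩ : ↥L) ∈ K' := hk
    have := hπ ⟨k, Submodule.mem_sup_right hk⟩
    rw [hpr] at this
    simpa [Submodule.projectionOnto_apply_of_mem_right hcompl hzK'] using this
  have hHle_range : H ≤ LinearMap.range π := fun h hh => ⟨h, hπH h hh⟩
  -- H is essential in range π
  have hrange_ess : ∀ y ∈ LinearMap.range π, y ≠ 0 → ∃ r : R, r • y ∈ H ∧ r • y ≠ 0 := by
    rintro y ⟨d, rfl⟩ hy0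
    set Y : Submodule R M := Submodule.comap π (Submodule.span R {π d}) with hY
    have hKY : K ≤ Y := by
      intro k hk
      have : π k = 0 := hπK k hk
      simp [hY, Submodule.mem_comap, this]
    have hdY : d ∈ Y := Submodule.mem_span_singleton_self (π d)
    have hYne : Y ≠ K := by
      intro hEq
      rw [hEq] at hdY
      exact hy0 (hπK d hdY)
    have hHY : H ⊓ Y ≠ ⊥ := by
      intro hHYbot
      exact hYne (le_antisymm (hKmax.2 ⟨hKS.1.trans hKY, hHYbot⟩ hKY) hKY)
    obtain ⟨h, hhHY, hh0⟩ := (Submodule.ne_bot_iff _).mp hHY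
    have hmem : π h ∈ Submodule.span R {π d} := hhHY.2
    rw [hπH h hhHY.1] at hmem
    obtain ⟨r, hr⟩ := Submodule.mem_span_singleton.mp hmem
    exact ⟨r, by rw [hr]; exact hhHY.1, by rw [hr]; exact hh0⟩
  have hS₁mem : LinearMap.range π ∈ S₁ := by
    refine ⟨hHS.1.trans hHle_range, ?_⟩
    intro x hx hx0
    obtain ⟨r, hrH, hr0⟩ := hrange_ess x hx hx0
    obtain ⟨s, hsA, hs0⟩ := hHS.2 _ hrH hr0
    exact ⟨s * r, by rwa [mul_smul], by rwa [mul_smul]⟩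
  have hrange : LinearMap.range π = H := le_antisymm (hHmax.2 hS₁mem hHle_range) hHle_range
  have hcompl2 : IsCompl H (LinearMap.ker π) := by
    constructor
    · rw [disjoint_iff, eq_bot_iff]
      rintro x ⟨hx1, hx2⟩
      have h1 : π x = x := hπH x hx1
      have h2 : π x = 0 := hx2
      rw [Submodule.mem_bot, ← h1, h2]
    · rw [codisjoint_iff, eq_top_iff]
      rintro d -
      have hπd : π d ∈ H := hrange ▸ LinearMap.mem_range_self π d
      have hker : d - π d ∈ LinearMap.ker π := by
        rw [LinearMap.mem_ker, map_sub, hπH _ hπd, sub_self]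
      exact Submodule.mem_sup.mpr ⟨π d, hπd, d - π d, hker, by abel⟩
  rcases hind.2 H (LinearMap.ker π) hcompl2 with h | h
  · rw [h] at hHS
    exact hA (le_bot_iff.mp hHS.1)
  · have hBker : B ≤ LinearMap.ker π := fun b hb => LinearMap.mem_ker.mpr (hπK b (hKS.1 hb))
    rw [h] at hBker
    exact hB (le_bot_iff.mp hBker)

lemma exists_mul_eq_zero_of_mem_minimalPrime [IsReduced R]
    {p : Ideal R} (hp : p ∈ minimalPrimes R) {z : R} (hz : z ∈ p) :
    ∃ s : R, s ∉ p ∧ s * z = 0 := by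
  haveI hprime : p.IsPrime := hp.1.1
  have hnil : IsNilpotent (algebraMap R (Localization p.primeCompl) z) := by
    have h1 := IsLocalization.AtPrime.radical_map_of_mem_minimalPrimes
      (A := Localization p.primeCompl) p ⊥ hp
    rw [Ideal.map_bot] at h1
    have h2 : algebraMap R (Localization p.primeCompl) z ∈
        (⊥ : Ideal (Localization p.primeCompl)).radical := h1 ▸ Ideal.mem_map_of_mem _ hz
    obtain ⟨m, hm⟩ := h2
    exact ⟨m, (Submodule.mem_bot _).mp hm⟩
  obtain ⟨m, hm⟩ := hnil
  rw [← map_pow] at hm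
  obtain ⟨s, hs⟩ := (IsLocalization.map_eq_zero_iff p.primeCompl _ _).mp hm
  rcases Nat.eq_zero_or_pos m with hm0 | hm0
  · subst hm0
    rw [pow_zero, mul_one] at hs
    have : (s : R) ∈ p := by rw [hs]; exact p.zero_mem
    exact absurd this s.2
  · refine ⟨s, s.2, ?_⟩
    obtain ⟨m', rfl⟩ : ∃ m', m = m' + 1 := ⟨m - 1, by omega⟩
    have hkey : ((s : R) * z) ^ (m' + 1) = 0 := by
      have : ((s : R) * z) ^ (m' + 1) = (s : R) ^ m' * ((s : R) * z ^ (m' + 1)) := by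
        rw [mul_pow, pow_succ]; ring
      rw [this, hs, mul_zero]
    exact IsNilpotent.eq_zero ⟨m' + 1, hkey⟩

lemma exists_orthogonal [IsReduced R] {m : ℕ} (p : Fin m → Ideal R)
    (hmem : ∀ k, p k ∈ minimalPrimes R) (hinj : Function.Injective p) :
    ∃ c : Fin m → R, (∀ k, c k ∉ p k) ∧ ∀ k l, k ≠ l → c k * c l = 0 := by
  classical
  haveI hprime : ∀ k, (p k).IsPrime := fun k => (hmem k).1.1
  have hnotle : ∀ j k, j ≠ k → ¬p j ≤ p k := by
    intro j k hjk hle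
    have := (hmem k).2 ⟨hprime j, bot_le⟩ hle
    exact hjk (hinj (le_antisymm hle this))
  have hx : ∀ j k : Fin m, j ≠ k → ∃ x, x ∈ p j ∧ x ∉ p k := by
    intro j k hjk
    by_contra hc
    push_neg at hc
    exact hnotle j k hjk fun x hxj => hc x hxj
  choose x hx1 hx2 using hx
  set x' : Fin m → Fin m → R := fun j k => if h : j ≠ k then x j k h else 1 with hx'
  have hx'1 : ∀ j k, j ≠ k → x' j k ∈ p j := by
    intro j k h; simp only [hx', dif_pos h]; exact hx1 j k h
  have hx'2 : ∀ j k, j ≠ k → x' j k ∉ p k := by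
    intro j k h; simp only [hx', dif_pos h]; exact hx2 j k h
  set a : Fin m → R := fun k => ∏ j ∈ Finset.univ.erase k, x' j k with ha
  have haP : ∀ k, a k ∉ p k := by
    intro k hk
    obtain ⟨j, hj, hjm⟩ := (Ideal.IsPrime.prod_mem_iff).mp hk
    exact hx'2 j k (Finset.mem_erase.mp hj).1 hjm
  have haJ : ∀ j k, j ≠ k → a k ∈ p j := by
    intro j k hjk
    obtain ⟨t, ht⟩ := Finset.dvd_prod_of_mem (fun j => x' j k)
      (Finset.mem_erase.mpr ⟨hjk, Finset.mem_univ j⟩)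
    rw [ha]
    simp only
    rw [ht]
    exact Ideal.mul_mem_right t _ (hx'1 j k hjk)
  have hs : ∀ k l : Fin m, k ≠ l → ∃ s, s ∉ p k ∧ s * (a k * a l) = 0 := by
    intro k l hkl
    exact exists_mul_eq_zero_of_mem_minimalPrime (hmem k)
      (Ideal.mul_mem_left _ _ (haJ k l hkl))
  choose s hs1 hs2 using hs
  set s' : Fin m → Fin m → R := fun k l => if h : k ≠ l then s k l h else 1 with hs'
  have hs'1 : ∀ k l, k ≠ l → s' k l ∉ p k := by
    intro k l h; simp only [hs', dif_pos h]; exact hs1 k l h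
  have hs'2 : ∀ k l, k ≠ l → s' k l * (a k * a l) = 0 := by
    intro k l h; simp only [hs', dif_pos h]; exact hs2 k l h
  refine ⟨fun k => a k * ∏ l ∈ Finset.univ.erase k, s' k l, ?_, ?_⟩
  · intro k hk
    rcases (hprime k).mem_or_mem hk with h | h
    · exact haP k h
    · obtain ⟨l, hl, hlm⟩ := (Ideal.IsPrime.prod_mem_iff).mp h
      exact hs'1 k l (Ne.symm (Finset.mem_erase.mp hl).1) hlm
  · intro k l hkl
    obtain ⟨u, hu⟩ := Finset.dvd_prod_of_mem (fun l => s' k l)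
      (Finset.mem_erase.mpr ⟨Ne.symm hkl, Finset.mem_univ l⟩)
    show a k * (∏ l' ∈ Finset.univ.erase k, s' k l') *
        (a l * ∏ l' ∈ Finset.univ.erase l, s' l l') = 0
    rw [hu]
    have heq : a k * (s' k l * u) * (a l * ∏ l' ∈ Finset.univ.erase l, s' l l') =
        s' k l * (a k * a l) * (u * ∏ l' ∈ Finset.univ.erase l, s' l l') := by ring
    rw [heq, hs'2 k l hkl, zero_mul]

end GoldieAux

/-- A reduced commutative ring of finite Goldie dimension (as a module over
itself) has only finitely many minimal primes. -/
theorem minimalPrimes_finite_of_reduced_finiteGoldieDimension (R : Type u) [CommRing R]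
    [IsReduced R] (h : HasFiniteGoldieDimension R R) :
    (minimalPrimes R).Finite := by
  rw [← Set.not_infinite]
  intro hinf
  obtain ⟨E, f, ⟨hEinj, hfinj, hess⟩, n, D, hDint, hD⟩ := h
  classical
  -- pick n+1 distinct minimal primes
  set e : ℕ ↪ ↥(minimalPrimes R) := hinf.natEmbedding with he
  set p : Fin (n + 1) → Ideal R := fun k => (e k).1 with hp
  have hpmem : ∀ k, p k ∈ minimalPrimes R := fun k => (e k).2
  have hpinj : Function.Injective p := by
    intro a b hab
    exact Fin.val_injective (e.injective (Subtype.ext hab))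
  obtain ⟨c, hcP, hcO⟩ := exists_orthogonal p hpmem hpinj
  have hc0 : ∀ k, c k ≠ 0 := fun k hk => hcP k (hk ▸ (p k).zero_mem)
  -- an independent family of nonzero ideals
  set J : Fin (n + 1) → Submodule R R := fun k => Submodule.span R {c k} with hJ
  have hJne : ∀ k, J k ≠ ⊥ := by
    intro k
    simpa [hJ, Submodule.span_singleton_eq_bot] using hc0 k
  have hJind : iSupIndep J := by
    intro k
    rw [disjoint_iff, eq_bot_iff]
    rintro y ⟨hy1, hy2⟩
    have hann : (⨆ (l) (_ : l ≠ k), J l) ≤ LinearMap.ker (LinearMap.mulLeft R (c k)) := by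
      refine iSup₂_le fun l hl => ?_
      refine (Submodule.span_singleton_le_iff_mem _ _).mpr ?_
      show c k * c l = 0
      exact hcO k l (Ne.symm hl)
    obtain ⟨r, hr⟩ := Submodule.mem_span_singleton.mp hy1
    have hzero : c k * y = 0 := hann hy2
    have hyy : y * y = 0 := by
      have h2 : y * y = r * (c k * y) := by rw [← hr, smul_eq_mul]; ring
      rw [h2, hzero, mul_zero]
    have hy0 : y = 0 := IsNilpotent.eq_zero ⟨2, by rw [pow_two]; exact hyy⟩
    exact (Submodule.mem_bot _).mpr hy0
  -- transport into E along the injective hull embedding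
  set N : Fin (n + 1) → Submodule R E := fun k => (J k).map f with hN
  have hNne : ∀ k, N k ≠ ⊥ := by
    intro k
    rw [Submodule.ne_bot_iff]
    refine ⟨f (c k), Submodule.mem_map_of_mem (Submodule.mem_span_singleton_self _), ?_⟩
    intro hk
    exact hc0 k (hfinj (by rw [hk, map_zero]))
  have hNind : iSupIndep N := by
    intro k
    rw [disjoint_iff, eq_bot_iff]
    rintro y ⟨hy1, hy2⟩
    have hsup : (⨆ (l) (_ : l ≠ k), N l) = Submodule.map f (⨆ (l) (_ : l ≠ k), J l) := by
      simp only [hN, Submodule.map_iSup]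
    rw [hsup] at hy2
    obtain ⟨z, hz, hzy⟩ := hy2
    obtain ⟨w, hw, hwy⟩ := hy1
    have hwz : w = z := hfinj (by rw [hzy, hwy])
    have hwmem : w ∈ J k ⊓ ⨆ (l) (_ : l ≠ k), J l := ⟨hw, hwz ▸ hz⟩
    rw [(hJind k).eq_bot] at hwmem
    have hw0 : w = 0 := hwmem
    rw [← hwy, hw0, map_zero]
    exact Submodule.zero_mem ⊥
  -- properties of the decomposition
  have hDind : iSupIndep D := hDint.submodule_iSupIndep
  have hDtop : ⨆ i, D i = ⊤ := hDint.submodule_iSup_eq_top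
  have hDne : ∀ i, D i ≠ ⊥ := by
    intro i
    haveI : Nontrivial ↥(D i) := (hD i).2.1
    exact Submodule.nontrivial_iff_ne_bot.mp this
  have hDuni : ∀ i, ∀ A B : Submodule R E, A ≤ D i → B ≤ D i → A ≠ ⊥ → B ≠ ⊥ → A ⊓ B ≠ ⊥ := by
    intro i A B hAle hBle hA hB hAB
    have hcomap : ∀ C : Submodule R E, C ≤ D i → C ≠ ⊥ → C.comap (D i).subtype ≠ ⊥ := by
      intro C hCle hC
      obtain ⟨xc, hxc, hxc0⟩ := (Submodule.ne_bot_iff _).mp hC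
      rw [Submodule.ne_bot_iff]
      refine ⟨⟨xc, hCle hxc⟩, hxc, ?_⟩
      intro hh
      exact hxc0 (congrArg Subtype.val hh)
    refine uniform_of_injective_indecomposable (↥(D i)) (hD i).1 (hD i).2
      (A.comap (D i).subtype) (B.comap (D i).subtype)
      (hcomap A hAle hA) (hcomap B hBle hB) ?_
    rw [← Submodule.comap_inf, hAB, Submodule.comap_bot, Submodule.ker_subtype]
  exact no_indep_family n D hDind hDtop hDuni hDne N hNind hNne
end

section
/- Let R be the trivial (square-zero) extension of ℤ by ℚ/ℤ, i.e., R = ℤ ⋉ ℚ/ℤ with multiplication (d, e)(d', e') = (dd', de' + d'e). Then R is an arithmetical ring, its unique minimal prime ideal is N = 0 ⋉ ℚ/ℤ, and R does not have finite Goldie dimension as an R-module. -/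
universe u

/-- `ℚ/ℤ` as a `ℤ`-module. -/
abbrev QZmod : Type := ℚ ⧸ (Submodule.span ℤ {(1 : ℚ)})

noncomputable instance : Module ℤᵐᵒᵖ QZmod :=
  Module.compHom QZmod ((RingHom.id ℤ).fromOpposite fun _ _ => mul_comm _ _)

instance : IsCentralScalar ℤ QZmod := ⟨fun _ _ => rfl⟩

/-- The trivial (square-zero) extension `ℤ ⋉ ℚ/ℤ`. -/
abbrev ZQZ : Type := TrivSqZeroExt ℤ QZmod

namespace Scratch

/-! ### basics -/

noncomputable def mkq : ℚ →ₗ[ℤ] QZmod := (Submodule.span ℤ {(1 : ℚ)}).mkQ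

lemma mkq_surj : Function.Surjective mkq := Submodule.mkQ_surjective _

lemma mkq_eq_zero (q : ℚ) : mkq q = 0 ↔ ∃ n : ℤ, (n : ℚ) = q := by
  rw [mkq, Submodule.mkQ_apply, Submodule.Quotient.mk_eq_zero, Submodule.mem_span_singleton]
  simp [zsmul_eq_mul]

lemma smul_mkq (c : ℤ) (q : ℚ) : c • mkq q = mkq (c * q) := by
  rw [← map_smul, zsmul_eq_mul]

lemma exists_smul_eq' (d : ℤ) (hd : d ≠ 0) (e : QZmod) : ∃ c, d • c = e := by
  obtain ⟨q, rfl⟩ := mkq_surj e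
  refine ⟨mkq (q / d), ?_⟩
  rw [smul_mkq]
  congr 1
  field_simp

lemma sq_zero (x : ZQZ) (h : x.fst = 0) : x * x = 0 := by
  apply TrivSqZeroExt.ext
  · simp [TrivSqZeroExt.fst_mul, h]
  · simp [TrivSqZeroExt.snd_mul, h, op_smul_eq_smul]

noncomputable abbrev NN : Ideal ZQZ := RingHom.ker (TrivSqZeroExt.fstHom ℤ ℤ QZmod)

lemma mem_NN (x : ZQZ) : x ∈ NN ↔ x.fst = 0 := by
  simp [NN, RingHom.mem_ker, TrivSqZeroExt.fstHom]
  exact Iff.rfl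

lemma NN_le_prime (P : Ideal ZQZ) (hP : P.IsPrime) : NN ≤ P := by
  intro x hx
  rw [mem_NN] at hx
  have : x * x ∈ P := by rw [sq_zero x hx]; exact P.zero_mem
  rcases hP.mem_or_mem this with h | h <;> exact h

/-- factor out the `p`-power of a nonzero integer -/
lemma pow_fact {p : ℕ} (hp : p.Prime) (d : ℤ) (hd : d ≠ 0) :
    ∃ (k : ℕ) (m : ℤ), ¬((p : ℤ) ∣ m) ∧ d = (p : ℤ) ^ k * m := by
  obtain ⟨k, m, hm, hn⟩ := Nat.exists_eq_pow_mul_and_not_dvd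
    (Int.natAbs_ne_zero.mpr hd) p hp.ne_one
  rcases Int.natAbs_eq d with h | h
  · refine ⟨k, (m : ℤ), ?_, by rw [h, hn]; push_cast; ring⟩
    exact_mod_cast fun hdvd => hm (Int.ofNat_dvd.mp hdvd)
  · refine ⟨k, -(m : ℤ), ?_, by rw [h, hn]; push_cast; ring⟩
    rw [dvd_neg]
    exact_mod_cast fun hdvd => hm (Int.ofNat_dvd.mp hdvd)

/-! ### characterization of maximal ideals -/

lemma mem_iff_inl_fst_mem (P : Ideal ZQZ) (hP : P.IsPrime) (x : ZQZ) :
    x ∈ P ↔ TrivSqZeroExt.inl x.fst ∈ P := by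
  have hinr : TrivSqZeroExt.inr x.snd ∈ P :=
    NN_le_prime P hP ((mem_NN _).mpr (TrivSqZeroExt.fst_inr _ _))
  constructor
  · intro hx
    have := P.sub_mem hx hinr
    rwa [show x - TrivSqZeroExt.inr x.snd = TrivSqZeroExt.inl x.fst from
      TrivSqZeroExt.ext (by simp) (by simp)] at this
  · intro hx
    have := P.add_mem hx hinr
    rwa [TrivSqZeroExt.inl_fst_add_inr_snd_eq x] at this

lemma maximal_char (P : Ideal ZQZ) (hP : P.IsMaximal) :
    ∃ p : ℕ, p.Prime ∧ ∀ x : ZQZ, x ∈ P ↔ (p : ℤ) ∣ x.fst := by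
  haveI hPp : P.IsPrime := hP.isPrime
  set I : Ideal ℤ := P.comap (TrivSqZeroExt.inlHom ℤ QZmod) with hI
  haveI : I.IsPrime := Ideal.IsPrime.comap _
  have memI : ∀ x : ZQZ, x ∈ P ↔ x.fst ∈ I := fun x => by
    rw [mem_iff_inl_fst_mem P hPp x]; rfl
  obtain ⟨g, hg⟩ : ∃ g : ℤ, I = Ideal.span {g} :=
    Submodule.IsPrincipal.principal I 
  rcases eq_or_ne g 0 with rfl | hg0
  · exfalso
    -- then P = NN, not maximal
    set J : Ideal ZQZ := Ideal.comap (TrivSqZeroExt.fstHom ℤ ℤ QZmod) (Ideal.span {(2:ℤ)}) with hJ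
    have hJtop : J ≠ ⊤ := by
      intro h
      have : (1 : ZQZ) ∈ J := h ▸ Submodule.mem_top
      have : (2:ℤ) ∣ 1 := by
        simpa [hJ, Ideal.mem_comap, Ideal.mem_span_singleton] using this
      norm_num at this
    have hPJ : P ≤ J := by
      intro x hx
      have : x.fst = 0 := by
        have := (memI x).mp hx
        simpa [hg, Ideal.mem_span_singleton] using this
      simp [hJ, Ideal.mem_comap, Ideal.mem_span_singleton, this]
    have := hP.eq_of_le hJtop hPJ
    have h2 : (TrivSqZeroExt.inl 2 : ZQZ) ∈ J := by
      simp [hJ, Ideal.mem_comap, Ideal.mem_span_singleton]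
    rw [← this] at h2
    have := (memI _).mp h2
    simp [hg, Ideal.mem_span_singleton] at this
  · have hgP : Prime g := by
      rw [← Ideal.span_singleton_prime hg0, ← hg]
      infer_instance
    refine ⟨g.natAbs, Int.prime_iff_natAbs_prime.mp hgP, fun x => ?_⟩
    rw [memI x, hg, Ideal.mem_span_singleton, Int.natAbs_dvd]

/-! ### chain ring criteria -/

lemma isChainRing_of_div {A : Type} [CommRing A]
    (H : ∀ x y : A, ∃ z, x = z * y ∨ y = z * x) : IsChainRing A := by
  intro I J
  by_contra hc
  push_neg at hc
  obtain ⟨hIJ, hJI⟩ := hc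
  rw [SetLike.not_le_iff_exists] at hIJ hJI
  obtain ⟨a, haI, haJ⟩ := hIJ
  obtain ⟨b, hbJ, hbI⟩ := hJI
  obtain ⟨z, h | h⟩ := H a b
  · exact haJ (h ▸ J.mul_mem_left z hbJ)
  · exact hbI (h ▸ I.mul_mem_left z haI)

lemma chain_of_cond {A : Type} [CommRing A] (P : Ideal A) [P.IsPrime]
    (H : ∀ r r' : A, ∃ u ∉ P, ∃ c, u * r' = c * r ∨ u * r = c * r') :
    IsChainRing (Localization.AtPrime P) := by
  apply isChainRing_of_div
  have key : ∀ (r s r' s' : A) (_ : s ∈ P.primeCompl) (_ : s' ∈ P.primeCompl)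
      (u c : A) (_ : u ∉ P) (x y : Localization.AtPrime P)
      (_ : x * algebraMap A _ s = algebraMap A _ r)
      (_ : y * algebraMap A _ s' = algebraMap A _ r')
      (_ : u * r' = c * r), ∃ z, y = z * x := by
    intro r s r' s' hs hs' u c hu x y hx hy huc
    have hus' : (u * s') ∈ P.primeCompl := by
      exact mul_mem hu hs'
    have hunit := IsLocalization.map_units (Localization.AtPrime P) ⟨u * s', hus'⟩
    obtain ⟨w, hw⟩ := hunit
    have main : algebraMap A (Localization.AtPrime P) (u * s') * y
        = algebraMap A _ (c * s) * x := by
      rw [map_mul, map_mul]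
      calc algebraMap A (Localization.AtPrime P) u * algebraMap A _ s' * y
          = algebraMap A _ u * (y * algebraMap A _ s') := by ring
        _ = algebraMap A _ u * algebraMap A _ r' := by rw [hy]
        _ = algebraMap A _ (u * r') := by rw [map_mul]
        _ = algebraMap A _ (c * r) := by rw [huc]
        _ = algebraMap A _ c * (x * algebraMap A _ s) := by rw [map_mul, hx]
        _ = algebraMap A _ c * algebraMap A _ s * x := by ring
    refine ⟨(↑w⁻¹ : _) * algebraMap A _ (c * s), ?_⟩
    have := congrArg (fun t => (↑w⁻¹ : Localization.AtPrime P) * t) main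
    rw [← hw] at this
    calc y = ↑w⁻¹ * ↑w * y := by rw [Units.inv_mul]; ring
      _ = ↑w⁻¹ * (↑w * y) := by ring
      _ = ↑w⁻¹ * (algebraMap A _ (c * s) * x) := by rw [hw] at this ⊢; exact this
      _ = ↑w⁻¹ * algebraMap A _ (c * s) * x := by ring
  intro x y
  obtain ⟨⟨r, s⟩, hx⟩ := IsLocalization.surj (M := P.primeCompl) (S := Localization.AtPrime P) x
  obtain ⟨⟨r', s'⟩, hy⟩ := IsLocalization.surj (M := P.primeCompl) (S := Localization.AtPrime P) y
  obtain ⟨u, hu, c, h | h⟩ := H r r'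
  · obtain ⟨z, hz⟩ := key r s r' s' s.2 s'.2 u c hu x y hx hy h
    exact ⟨z, Or.inr hz⟩
  · obtain ⟨z, hz⟩ := key r' s' r s s'.2 s.2 u c hu y x hy hx h
    exact ⟨z, Or.inl hz⟩

end Scratch

namespace Scratch2
open Scratch

lemma fstm (x y : ZQZ) : (x * y).fst = x.fst * y.fst := TrivSqZeroExt.fst_mul x y

lemma sndm (x y : ZQZ) : (x * y).snd = x.fst • y.snd + y.fst • x.snd := by
  rw [TrivSqZeroExt.snd_mul]
  simp [op_smul_eq_smul]

lemma not_dvd_one {p : ℕ} (hp : p.Prime) : ¬ ((p : ℤ) ∣ (1:ℤ)) := by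
  intro h
  have := Int.le_of_dvd one_pos h
  have := hp.one_lt
  omega

/-- helper for the p-primary comparison -/
lemma bz_helper {p : ℕ} (hp : p.Prime) (x y : ℤ) (k l : ℕ) (hkl : k ≤ l)
    (hy : l ≠ 0 → ¬ (p:ℤ) ∣ y) :
    ∃ c : ℤ, mkq ((x:ℚ) / (p:ℚ)^k) = c • mkq ((y:ℚ) / (p:ℚ)^l) := by
  rcases Nat.eq_zero_or_pos l with rfl | hl
  · have hk : k = 0 := Nat.le_zero.mp hkl
    subst hk
    refine ⟨0, ?_⟩
    rw [zero_smul]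
    rw [mkq_eq_zero]
    exact ⟨x, by norm_num⟩
  · have hp' : Prime (p:ℤ) := Nat.prime_iff_prime_int.mp hp
    have hpy : ¬ (p:ℤ) ∣ y := hy hl.ne'
    have hcop : IsCoprime (y:ℤ) ((p:ℤ)^l) :=
      ((hp'.coprime_iff_not_dvd).mpr hpy).symm.pow_right
    obtain ⟨s, t, hst⟩ := hcop
    refine ⟨s * x * (p:ℤ)^(l-k), ?_⟩
    rw [smul_mkq]
    have hp0 : ((p:ℚ)) ≠ 0 := by exact_mod_cast hp.ne_zero
    have hst' : (s:ℚ) * y + t * (p:ℚ)^l = 1 := by exact_mod_cast congrArg (Int.cast : ℤ → ℚ) hst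
    have hkey : ((s * x * (p:ℤ)^(l-k) : ℤ) : ℚ) * ((y:ℚ) / (p:ℚ)^l)
        = (x:ℚ)/(p:ℚ)^k - ((x * t * (p:ℤ)^(l-k) : ℤ) : ℚ) := by
      have hql : ((p:ℚ))^l = (p:ℚ)^(l-k) * (p:ℚ)^k := by
        rw [← pow_add, Nat.sub_add_cancel hkl]
      have hst'' : (s:ℚ) * y + t * ((p:ℚ)^(l-k) * (p:ℚ)^k) = 1 := by rw [← hql]; exact hst'
      push_cast
      field_simp
      rw [hql]; linear_combination ((x:ℚ) * (p:ℚ)^(l-k) * (p:ℚ)^k) * hst''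
    rw [hkey]
    rw [map_sub]
    have : mkq ((x * t * (p:ℤ)^(l-k) : ℤ) : ℚ) = 0 := (mkq_eq_zero _).mpr ⟨_, rfl⟩
    rw [this, sub_zero]

end Scratch2

namespace Scratch3
open Scratch Scratch2

lemma mul_rep (q : ℚ) (p k n w : ℕ) (hden : q.den = p ^ k * n) :
    ((n * w : ℕ) : ℚ) * q = ((w * q.num : ℤ) : ℚ) / (p : ℚ) ^ k := by
  have hd0 : (q.den : ℚ) ≠ 0 := by exact_mod_cast q.den_nz
  have hdQ : (q.den : ℚ) = (p : ℚ) ^ k * (n : ℚ) := by exact_mod_cast congrArg (Nat.cast : ℕ → ℚ) hden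
  have hn0 : (n : ℚ) ≠ 0 := by
    intro h; rw [h, mul_zero] at hdQ; exact hd0 hdQ
  have hp0 : ((p : ℚ)) ^ k ≠ 0 := by
    intro h; rw [h, zero_mul] at hdQ; exact hd0 hdQ
  rw [eq_div_iff hp0]
  have hqd : (q.num : ℚ) = q * q.den := (div_eq_iff hd0).mp (Rat.num_div_den q)
  push_cast [hqd, hdQ]
  ring

lemma bz2 {p : ℕ} (hp : p.Prime) (q q' : ℚ) (k l n n' : ℕ)
    (hq : q.den = p ^ k * n) (hq' : q'.den = p ^ l * n')
    (hn : ¬ p ∣ n) (hn' : ¬ p ∣ n') (hkl : k ≤ l) :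
    ∃ u₀ c₀ : ℤ, ¬ ((p : ℤ) ∣ u₀) ∧ u₀ • mkq q = c₀ • mkq q' := by
  have hu : ¬ ((p : ℤ) ∣ ((n * n' : ℕ) : ℤ)) := by
    rw [Int.natCast_dvd_natCast]
    intro h
    rcases (Nat.Prime.dvd_mul hp).mp h with h | h
    exacts [hn h, hn' h]
  have e1 : ((n * n' : ℕ) : ℤ) • mkq q = mkq (((n' * q.num : ℤ) : ℚ) / (p : ℚ) ^ k) := by
    rw [smul_mkq]
    congr 1
    rw [← mul_rep q p k n n' hq]; push_cast; ring
  have e2 : ((n * n' : ℕ) : ℤ) • mkq q' = mkq (((n * q'.num : ℤ) : ℚ) / (p : ℚ) ^ l) := by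
    rw [smul_mkq]
    congr 1
    rw [← mul_rep q' p l n' n hq']; push_cast; ring
  have hy : l ≠ 0 → ¬ (p : ℤ) ∣ (n * q'.num : ℤ) := by
    intro hl hdvd
    have hp' : Prime (p : ℤ) := Nat.prime_iff_prime_int.mp hp
    rcases hp'.dvd_mul.mp hdvd with h | h
    · rw [Int.natCast_dvd_natCast] at h; exact hn h
    · have h1 : p ∣ q'.num.natAbs := by
        have := Int.natAbs_dvd_natAbs.mpr h
        simpa using this
      have h2 : p ∣ q'.den := by
        rw [hq']
        exact dvd_mul_of_dvd_left (dvd_pow_self p hl) n'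
      have : p ∣ 1 := by
        have := Nat.dvd_gcd h1 h2
        rwa [Nat.Coprime.gcd_eq_one q'.reduced] at this
      exact hp.one_lt.ne' (Nat.dvd_one.mp this)
  obtain ⟨c, hc⟩ := bz_helper hp (n' * q.num) (n * q'.num) k l hkl hy
  refine ⟨((n * n' : ℕ) : ℤ), c * ((n * n' : ℕ) : ℤ), hu, ?_⟩
  rw [e1, hc, mul_smul, ← e2]

lemma bothzero {p : ℕ} (hp : p.Prime) (e e' : QZmod) :
    ∃ u₀ c₀ : ℤ, ¬ ((p : ℤ) ∣ u₀) ∧ (u₀ • e = c₀ • e' ∨ u₀ • e' = c₀ • e) := by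
  obtain ⟨q, rfl⟩ := mkq_surj e
  obtain ⟨q', rfl⟩ := mkq_surj e'
  obtain ⟨k, n, hn, hden⟩ := Nat.exists_eq_pow_mul_and_not_dvd q.den_nz p hp.ne_one
  obtain ⟨l, n', hn', hden'⟩ := Nat.exists_eq_pow_mul_and_not_dvd q'.den_nz p hp.ne_one
  rcases le_total k l with hkl | hkl
  · obtain ⟨u₀, c₀, hu, h⟩ := bz2 hp q q' k l n n' hden hden' hn hn' hkl
    exact ⟨u₀, c₀, hu, Or.inl h⟩
  · obtain ⟨u₀, c₀, hu, h⟩ := bz2 hp q' q l k n' n hden' hden hn' hn hkl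
    exact ⟨u₀, c₀, hu, Or.inr h⟩

end Scratch3

namespace Scratch4
open Scratch Scratch2 Scratch3

lemma keyhelp {p : ℕ} (hp : p.Prime) (P : Ideal ZQZ)
    (hPc : ∀ x : ZQZ, x ∈ P ↔ (p : ℤ) ∣ x.fst) (r r' : ZQZ) (hd : r.fst ≠ 0)
    (k l : ℕ) (m m' : ℤ) (hm : ¬ (p:ℤ) ∣ m) (hr : r.fst = (p:ℤ) ^ k * m)
    (hr' : r'.fst = (p:ℤ) ^ l * m') (hkl : k ≤ l) :
    ∃ u ∉ P, ∃ c, u * r' = c * r := by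
  obtain ⟨c₁, hc₁⟩ := exists_smul_eq' r.fst hd
    (m • r'.snd - ((p:ℤ) ^ (l - k) * m') • r.snd)
  refine ⟨TrivSqZeroExt.inl m, ?_, (@id ZQZ ⟨(p:ℤ) ^ (l - k) * m', c₁⟩), ?_⟩
  · rw [hPc]
    simpa using hm
  · apply TrivSqZeroExt.ext
    · rw [fstm, fstm, hr, hr']
      show m * ((p:ℤ) ^ l * m') = (p:ℤ) ^ (l - k) * m' * ((p:ℤ) ^ k * m)
      rw [show (p:ℤ) ^ (l - k) * m' * ((p:ℤ) ^ k * m) = ((p:ℤ) ^ (l-k) * (p:ℤ)^k) * (m' * m) by ring,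
        ← pow_add, Nat.sub_add_cancel hkl]
      ring
    · rw [sndm, sndm]
      show m • r'.snd + r'.fst • (0 : QZmod) = ((p:ℤ) ^ (l - k) * m') • r.snd + r.fst • c₁
      rw [hc₁]
      rw [smul_zero, add_zero]
      abel

lemma key {p : ℕ} (hp : p.Prime) (P : Ideal ZQZ)
    (hPc : ∀ x : ZQZ, x ∈ P ↔ (p : ℤ) ∣ x.fst) :
    ∀ r r' : ZQZ, ∃ u ∉ P, ∃ c, u * r' = c * r ∨ u * r = c * r' := by
  have h1P : (1 : ZQZ) ∉ P := by
    rw [hPc]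
    simpa using not_dvd_one hp
  intro r r'
  rcases eq_or_ne r.fst 0 with h0 | h0 <;> rcases eq_or_ne r'.fst 0 with h0' | h0'
  · -- both in N
    obtain ⟨u₀, c₀, hu, hor⟩ := bothzero hp r.snd r'.snd
    refine ⟨TrivSqZeroExt.inl u₀, by rw [hPc]; simpa using hu, TrivSqZeroExt.inl c₀, ?_⟩
    have e : ∀ (a : ℤ) (x : ZQZ), x.fst = 0 → TrivSqZeroExt.inl a * x
        = (@id ZQZ ⟨0, a • x.snd⟩) := by
      intro a x hx
      apply TrivSqZeroExt.ext
      · rw [fstm]; show a * x.fst = 0; rw [hx, mul_zero]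
      · rw [sndm]; show a • x.snd + x.fst • (0:QZmod) = a • x.snd
        rw [smul_zero, add_zero]
    rcases hor with h | h
    · right
      rw [e u₀ r h0, e c₀ r' h0']
      exact TrivSqZeroExt.ext rfl h
    · left
      rw [e u₀ r' h0', e c₀ r h0]
      exact TrivSqZeroExt.ext rfl h
  · -- r ∈ N, r' not
    obtain ⟨c₁, hc₁⟩ := exists_smul_eq' r'.fst h0' r.snd
    refine ⟨1, h1P, (@id ZQZ ⟨0, c₁⟩), Or.inr ?_⟩
    rw [one_mul]
    apply TrivSqZeroExt.ext
    · rw [fstm]; show r.fst = 0 * r'.fst; rw [h0, zero_mul]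
    · rw [sndm]; show r.snd = (0:ℤ) • r'.snd + r'.fst • c₁
      rw [hc₁, zero_smul, zero_add]
  · -- r' ∈ N, r not
    obtain ⟨c₁, hc₁⟩ := exists_smul_eq' r.fst h0 r'.snd
    refine ⟨1, h1P, (@id ZQZ ⟨0, c₁⟩), Or.inl ?_⟩
    rw [one_mul]
    apply TrivSqZeroExt.ext
    · rw [fstm]; show r'.fst = 0 * r.fst; rw [h0', zero_mul]
    · rw [sndm]; show r'.snd = (0:ℤ) • r.snd + r.fst • c₁
      rw [hc₁, zero_smul, zero_add]
  · obtain ⟨k, m, hm, hr⟩ := pow_fact hp r.fst h0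
    obtain ⟨l, m', hm', hr'⟩ := pow_fact hp r'.fst h0'
    rcases le_total k l with hkl | hkl
    · obtain ⟨u, hu, c, hc⟩ := keyhelp hp P hPc r r' h0 k l m m' hm hr hr' hkl
      exact ⟨u, hu, c, Or.inl hc⟩
    · obtain ⟨u, hu, c, hc⟩ := keyhelp hp P hPc r' r h0' l k m' m hm' hr' hr hkl
      exact ⟨u, hu, c, Or.inr hc⟩

theorem arithmetical : IsArithmetical ZQZ := by
  intro P hP
  haveI := hP.isPrime
  obtain ⟨p, hp, hPc⟩ := maximal_char P hP
  exact chain_of_cond P (key hp P hPc)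

end Scratch4

namespace Scratch

lemma NN_prime : NN.IsPrime := RingHom.ker_isPrime _

lemma minimalPrimes_eq : minimalPrimes ZQZ = {NN} := by
  ext P
  simp only [Set.mem_singleton_iff]
  constructor
  · rintro ⟨⟨hP, -⟩, hmin⟩
    have := hmin (y := NN) ⟨NN_prime, bot_le⟩ (NN_le_prime P hP)
    exact le_antisymm this (NN_le_prime P hP)
  · rintro rfl
    exact ⟨⟨NN_prime, bot_le⟩, fun {Q} hQ hle => NN_le_prime Q hQ.1⟩

end Scratch

namespace Scratch

/-- the `p`-primary part of `ℚ/ℤ` -/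
def Tp (p : ℕ) : Submodule ℤ QZmod where
  carrier := {x | ∃ k : ℕ, (p : ℤ) ^ k • x = 0}
  zero_mem' := ⟨0, smul_zero _⟩
  add_mem' := by
    rintro x y ⟨k, hk⟩ ⟨l, hl⟩
    refine ⟨k + l, ?_⟩
    have h1 : (p:ℤ) ^ (k + l) • x = 0 := by rw [pow_add, mul_comm, mul_smul, hk, smul_zero]
    have h2 : (p:ℤ) ^ (k + l) • y = 0 := by rw [pow_add, mul_smul, hl, smul_zero]
    rw [smul_add, h1, h2, add_zero]
  smul_mem' := by
    rintro c x ⟨k, hk⟩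
    exact ⟨k, by rw [smul_comm, hk, smul_zero]⟩

lemma tp_div {p : ℕ} (hp : p.Prime) (x : QZmod) (hx : x ∈ Tp p) (d : ℤ) (hd : d ≠ 0) :
    ∃ w ∈ Tp p, d • w = x := by
  obtain ⟨k, hk⟩ := hx
  obtain ⟨a, m, hm, rfl⟩ := pow_fact hp d hd
  obtain ⟨q, rfl⟩ := mkq_surj x
  have hp0 : ((p : ℚ)) ≠ 0 := by exact_mod_cast hp.ne_zero
  set w₁ : QZmod := mkq (q / (p : ℚ) ^ a) with hw₁
  have hw₁mem : ((p:ℤ) ^ (k + a)) • w₁ = 0 := by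
    rw [hw₁, smul_mkq]
    have : ((((p:ℤ) ^ (k + a) : ℤ)) : ℚ) * (q / (p:ℚ) ^ a) = ((p:ℤ)^k : ℤ) * q := by
      push_cast
      field_simp
      ring
    rw [this, ← smul_mkq, hk]
  have hw₁div : ((p:ℤ) ^ a) • w₁ = mkq q := by
    rw [hw₁, smul_mkq]
    congr 1
    push_cast
    field_simp
  have hcop : IsCoprime (m : ℤ) ((p:ℤ) ^ (k + a)) :=
    (((Nat.prime_iff_prime_int.mp hp).coprime_iff_not_dvd).mpr hm).symm.pow_right
  obtain ⟨s, t, hst⟩ := hcop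
  refine ⟨s • w₁, ⟨k + a, by rw [smul_comm, hw₁mem, smul_zero]⟩, ?_⟩
  have : ((p:ℤ)^a * m) • (s • w₁) = (p:ℤ)^a • ((m * s) • w₁) := by
    rw [mul_smul, mul_smul]
  rw [this]
  have : ((m : ℤ) * s) • w₁ = w₁ := by
    have h1 : (m * s : ℤ) = 1 - t * (p:ℤ)^(k+a) := by linarith [hst]
    rw [h1, sub_smul, one_smul, mul_smul, hw₁mem, smul_zero, sub_zero]
  rw [this, hw₁div]

lemma baer_Tp {p : ℕ} (hp : p.Prime) : Module.Baer ℤ ↥(Tp p) := by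
  intro I g
  obtain ⟨a, ha⟩ := Submodule.IsPrincipal.principal I
  rcases eq_or_ne a 0 with rfl | ha0
  · refine ⟨0, fun x hx => ?_⟩
    have hx0 : x = 0 := by
      rw [ha] at hx
      simpa using Ideal.mem_span_singleton.mp hx
    subst hx0
    rw [show (⟨0, hx⟩ : ↥I) = 0 from Subtype.ext rfl, map_zero]
    simp
  · have haI : a ∈ I := by rw [ha]; exact Ideal.mem_span_singleton_self a
    set z : ↥(Tp p) := g ⟨a, haI⟩ with hz
    obtain ⟨w, hwmem, hw⟩ := tp_div hp (z : QZmod) z.2 a ha0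
    refine ⟨LinearMap.toSpanSingleton ℤ _ (⟨w, hwmem⟩ : ↥(Tp p)), fun x hx => ?_⟩
    obtain ⟨c, hc⟩ := Ideal.mem_span_singleton'.mp (ha ▸ hx)
    have hsub : (⟨x, hx⟩ : ↥I) = c • ⟨a, haI⟩ := Subtype.ext (by simp [← hc, smul_eq_mul])
    rw [hsub, map_smul, LinearMap.toSpanSingleton_apply]
    apply Subtype.ext
    have : (a • (⟨w, hwmem⟩ : ↥(Tp p)) : ↥(Tp p)) = z := Subtype.ext (by simpa using hw)
    calc ((x • (⟨w, hwmem⟩ : ↥(Tp p)) : ↥(Tp p)) : QZmod) = (x • w : QZmod) := rfl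
      _ = ((c * a) • w : QZmod) := by rw [hc]
      _ = (c • (a • w) : QZmod) := by rw [mul_smul]
      _ = ((c • z : ↥(Tp p)) : QZmod) := by
          rw [Submodule.coe_smul, ← hw]

noncomputable instance injTp {p : ℕ} [hp : Fact p.Prime] : Module.Injective ℤ ↥(Tp p) :=
  (baer_Tp hp.out).injective

end Scratch

namespace Scratch

/-! ### the ZQZ-module `H = Hom_ℤ(ZQZ, ℚ/ℤ)` -/

abbrev H : Type := ZQZ →+ QZmod

noncomputable instance moduleH : Module ZQZ H where
  smul r f := f.comp (AddMonoidHom.mulRight r)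
  one_smul f := by ext z; show f (z * 1) = f z; rw [mul_one]
  mul_smul r s f := by ext z; show f (z * (r * s)) = f (z * r * s); rw [mul_assoc]
  smul_zero r := by ext z; rfl
  smul_add r f g := by ext z; rfl
  add_smul r s f := by
    ext z
    show f (z * (r + s)) = f (z * r) + f (z * s)
    rw [mul_add, map_add]
  zero_smul f := by ext z; show f (z * 0) = 0; rw [mul_zero, map_zero]

lemma smul_H_apply (r : ZQZ) (f : H) (z : ZQZ) : (r • f) z = f (z * r) := rfl

/-- the injective hull of `R/P_p` as a submodule of `H` -/
noncomputable def Wp (p : ℕ) : Submodule ZQZ H where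
  carrier := {f | ∀ z, f z ∈ Tp p}
  zero_mem' := fun z => (Tp p).zero_mem
  add_mem' := fun hf hg z => (Tp p).add_mem (hf z) (hg z)
  smul_mem' := fun r f hf z => hf (z * r)

set_option synthInstance.maxHeartbeats 1000000 in
set_option maxHeartbeats 2000000 in
lemma injective_Wp {p : ℕ} (hp : p.Prime) : Module.Injective ZQZ ↥(Wp p) := by
  constructor
  intro X Y _ _ _ _ ι hι g
  -- the ℤ-linear "evaluation at 1"
  set G : X →+ ↥(Tp p) :=
    { toFun := fun x => ⟨(g x : H) 1, (g x).2 1⟩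
      map_zero' := by apply Subtype.ext; simp
      map_add' := fun x y => by apply Subtype.ext; simp } with hG
  obtain ⟨G', hG'⟩ := (baer_Tp hp).extension_property_addMonoidHom ι.toAddMonoidHom
    (by exact hι) G
  have hmem : ∀ y : Y, ((Tp p).subtype.toAddMonoidHom.comp
      (G'.comp (LinearMap.toSpanSingleton ZQZ Y y).toAddMonoidHom)) ∈ Wp p := by
    intro y z
    exact (G' (z • y)).2
  set h : Y →ₗ[ZQZ] ↥(Wp p) :=
    { toFun := fun y => ⟨_, hmem y⟩
      map_add' := fun y₁ y₂ => by
        apply Subtype.ext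
        apply AddMonoidHom.ext
        intro z
        show (G' (z • (y₁ + y₂)) : QZmod) = ((⟨_, hmem y₁⟩ + ⟨_, hmem y₂⟩ : ↥(Wp p)) : H) z
        have : ((⟨_, hmem y₁⟩ + ⟨_, hmem y₂⟩ : ↥(Wp p)) : H) z
            = (G' (z • y₁) : QZmod) + (G' (z • y₂) : QZmod) := rfl
        rw [this, smul_add, map_add]
        rfl
      map_smul' := fun r y => by
        apply Subtype.ext
        apply AddMonoidHom.ext
        intro z
        show (G' (z • (r • y)) : QZmod) = ((r • (⟨_, hmem y⟩ : ↥(Wp p)) : ↥(Wp p)) : H) z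
        have : ((r • (⟨_, hmem y⟩ : ↥(Wp p)) : ↥(Wp p)) : H) z = (G' ((z * r) • y) : QZmod) := rfl
        rw [this, smul_smul] } with hh
  refine ⟨h, fun x => ?_⟩
  apply Subtype.ext
  apply AddMonoidHom.ext
  intro z
  show (G' (z • ι x) : QZmod) = (g x : H) z
  rw [show z • ι x = ι (z • x) from (map_smul ι z x).symm]
  have h1 : G' (ι (z • x)) = G (z • x) := by
    have := congrArg (fun (φ : X →+ ↥(Tp p)) => φ (z • x)) hG'
    simpa using this
  rw [h1]
  show ((g (z • x) : H) 1 : QZmod) = (g x : H) z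
  rw [map_smul g z x]
  show ((z • (g x : H)) 1 : QZmod) = (g x : H) z
  rw [smul_H_apply, one_mul]

end Scratch

namespace Scratch

/-! ### `1/p` in `ℚ/ℤ` -/

noncomputable def oinv (p : ℕ) : QZmod := mkq ((p : ℚ)⁻¹)

lemma smul_oinv_eq_zero {p : ℕ} (hp : p.Prime) (c : ℤ) :
    c • oinv p = 0 ↔ (p : ℤ) ∣ c := by
  have hp0 : ((p : ℚ)) ≠ 0 := by exact_mod_cast hp.ne_zero
  rw [oinv, smul_mkq, mkq_eq_zero]
  constructor
  · rintro ⟨n, hn⟩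
    have : (n : ℚ) * p = c := by
      rw [hn]; field_simp
    have h2 : c = (p : ℤ) * n := by exact_mod_cast (by rw [← this]; ring : (c : ℚ) = (p : ℚ) * n)
    exact ⟨n, h2⟩
  · rintro ⟨n, rfl⟩
    refine ⟨n, ?_⟩
    push_cast
    rw [mul_comm ((p : ℚ)) (n : ℚ), mul_assoc, mul_inv_cancel₀ hp0, mul_one]

lemma oinv_ne_zero {p : ℕ} (hp : p.Prime) : oinv p ≠ 0 := by
  intro h
  have : (1 : ℤ) • oinv p = 0 := by rw [one_smul, h]
  rw [smul_oinv_eq_zero hp] at this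
  have := Int.le_of_dvd one_pos this
  have := hp.one_lt
  omega

lemma p_smul_oinv {p : ℕ} (hp : p.Prime) : (p : ℤ) • oinv p = 0 :=
  (smul_oinv_eq_zero hp _).mpr dvd_rfl

lemma eq_smul_oinv_of_p_torsion {p : ℕ} (hp : p.Prime) (x : QZmod)
    (hx : (p : ℤ) • x = 0) : ∃ m : ℤ, x = m • oinv p := by
  have hp0 : ((p : ℚ)) ≠ 0 := by exact_mod_cast hp.ne_zero
  obtain ⟨q, rfl⟩ := mkq_surj x
  rw [smul_mkq, mkq_eq_zero] at hx
  obtain ⟨n, hn⟩ := hx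
  refine ⟨n, ?_⟩
  rw [oinv, smul_mkq]
  push_cast at hn
  congr 1
  rw [hn, mul_comm ((p : ℚ)) q, mul_assoc, mul_inv_cancel₀ hp0, mul_one]

lemma fst_zsmul (d : ℤ) (x : ZQZ) : (d • x).fst = d • x.fst := rfl
lemma snd_zsmul (d : ℤ) (x : ZQZ) : (d • x).snd = d • x.snd := rfl

/-- the canonical generator of the socle of `Wp p` -/
noncomputable def F₀ (p : ℕ) : H :=
  { toFun := fun z => z.fst • oinv p
    map_zero' := by simp
    map_add' := fun a b => by simp [add_smul] }

lemma F₀_apply (p : ℕ) (z : ZQZ) : F₀ p z = z.fst • oinv p := rfl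

lemma F₀_mem_Wp {p : ℕ} (hp : p.Prime) : F₀ p ∈ Wp p := by
  intro z
  exact ⟨1, by rw [F₀_apply, pow_one, smul_comm, p_smul_oinv hp, smul_zero]⟩

lemma smul_F₀_apply (p : ℕ) (a : ℤ) (z : ZQZ) :
    ((TrivSqZeroExt.inl a : ZQZ) • F₀ p) z = z.fst • (a • oinv p) := by
  rw [smul_H_apply, F₀_apply, TrivSqZeroExt.fst_mul, TrivSqZeroExt.fst_inl, mul_smul]

/-- essentiality of the socle in `Wp` -/
lemma essential_Wp {p : ℕ} (hp : p.Prime) (F : H) (hF : F ∈ Wp p) (hF0 : F ≠ 0) :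
    ∃ (r : ZQZ) (m : ℤ), ¬ ((p : ℤ) ∣ m) ∧ r • F = (TrivSqZeroExt.inl m : ZQZ) • F₀ p := by
  classical
  have hsmul1 : ∀ d : ℤ, (d • (1 : ZQZ)) = TrivSqZeroExt.inl d := by
    intro d
    apply TrivSqZeroExt.ext
    · rw [fst_zsmul, TrivSqZeroExt.fst_one, TrivSqZeroExt.fst_inl, smul_eq_mul, mul_one]
    · rw [snd_zsmul, TrivSqZeroExt.snd_one, TrivSqZeroExt.snd_inl, smul_zero]
  have hFinl : ∀ d : ℤ, F (TrivSqZeroExt.inl d) = d • F 1 := by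
    intro d
    rw [← hsmul1 d, map_zsmul]
  have main : ∀ (y : QZmod), (∃ k : ℕ, (p:ℤ)^k • y = 0) → y ≠ 0 →
      ∃ (b m : ℤ), ¬ ((p : ℤ) ∣ m) ∧ b • y = m • oinv p ∧ b • y ≠ 0 := by
    intro y hex hy0
    set k := Nat.find hex with hk
    have hkspec : (p:ℤ)^k • y = 0 := Nat.find_spec hex
    have hk1 : k ≠ 0 := by
      intro h
      rw [hk] at h
      have := Nat.find_spec hex
      rw [h, pow_zero, one_smul] at this
      exact hy0 this
    have hlt : ¬ ((p:ℤ)^(k-1) • y = 0) :=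
      Nat.find_min hex (Nat.sub_lt (Nat.pos_of_ne_zero hk1) one_pos)
    have hptors : (p:ℤ) • ((p:ℤ)^(k-1) • y) = 0 := by
      rw [← mul_smul, ← pow_succ', Nat.sub_add_cancel (Nat.one_le_iff_ne_zero.mpr hk1)]
      exact hkspec
    obtain ⟨m, hm⟩ := eq_smul_oinv_of_p_torsion hp _ hptors
    refine ⟨(p:ℤ)^(k-1), m, ?_, hm, hlt⟩
    intro hdvd
    obtain ⟨m', rfl⟩ := hdvd
    rw [mul_comm, mul_smul, p_smul_oinv hp, smul_zero] at hm
    exact hlt hm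
  by_cases hN : ∀ e : QZmod, F (TrivSqZeroExt.inr e) = 0
  · -- `F` vanishes on the nilradical
    have hy1 : F 1 ≠ 0 := by
      intro h
      apply hF0
      ext z
      rw [show (z : ZQZ) = TrivSqZeroExt.inl z.fst + TrivSqZeroExt.inr z.snd from
        (TrivSqZeroExt.inl_fst_add_inr_snd_eq z).symm]
      rw [map_add, hFinl, hN, h, smul_zero, add_zero, AddMonoidHom.zero_apply]
    obtain ⟨b, m, hm, hb, hb0⟩ := main (F 1) (hF 1) hy1
    refine ⟨TrivSqZeroExt.inl b, m, hm, ?_⟩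
    ext z
    rw [smul_H_apply, smul_F₀_apply]
    have hz : z * TrivSqZeroExt.inl b = TrivSqZeroExt.inl (z.fst * b) +
        TrivSqZeroExt.inr (b • z.snd) := by
      apply TrivSqZeroExt.ext
      · rw [TrivSqZeroExt.fst_mul, TrivSqZeroExt.fst_inl]
        simp
      · rw [TrivSqZeroExt.snd_mul, TrivSqZeroExt.snd_inl]
        simp [op_smul_eq_smul]
    rw [hz, map_add, hFinl, hN, add_zero, mul_smul, hb]
  · push_neg at hN
    obtain ⟨e, he⟩ := hN
    obtain ⟨b, m, hm, hb, hb0⟩ := main (F (TrivSqZeroExt.inr e)) (hF _) he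
    refine ⟨TrivSqZeroExt.inr (b • e), m, hm, ?_⟩
    ext z
    rw [smul_H_apply, smul_F₀_apply]
    have hz : z * TrivSqZeroExt.inr (b • e) = (z.fst * b) • TrivSqZeroExt.inr e := by
      apply TrivSqZeroExt.ext
      · rw [TrivSqZeroExt.fst_mul, fst_zsmul, TrivSqZeroExt.fst_inr]
        simp
      · rw [TrivSqZeroExt.snd_mul, snd_zsmul, TrivSqZeroExt.snd_inr]
        simp [op_smul_eq_smul, mul_smul]
    rw [hz, map_zsmul, mul_smul, hb]

end Scratch

namespace Scratch

/-! ### generic module lemmas -/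

lemma inj_equiv {M N : Type} [AddCommGroup M] [Module ZQZ M] [AddCommGroup N] [Module ZQZ N]
    (e : M ≃ₗ[ZQZ] N) (hM : Module.Injective ZQZ M) : Module.Injective ZQZ N := by
  constructor
  intro X Y _ _ _ _ f hf g
  obtain ⟨h, hh⟩ := hM.out f hf (e.symm.toLinearMap ∘ₗ g)
  exact ⟨e.toLinearMap ∘ₗ h, fun x => by simp [hh x]⟩

lemma compl_of_injective {D' : Type} [AddCommGroup D'] [Module ZQZ D']
    (S : Submodule ZQZ D') (hS : Module.Injective ZQZ ↥S) : ∃ K, IsCompl S K := by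
  obtain ⟨r, hr⟩ := hS.out S.subtype (Submodule.injective_subtype S) LinearMap.id
  refine ⟨LinearMap.ker r, ⟨?_, ?_⟩⟩
  · rw [Submodule.disjoint_def]
    intro x hxS hxK
    rw [LinearMap.mem_ker] at hxK
    have hx0 : r x = (⟨x, hxS⟩ : ↥S) := hr ⟨x, hxS⟩
    rw [hxK] at hx0
    simpa using congrArg Subtype.val hx0.symm
  · rw [codisjoint_iff, eq_top_iff]
    intro x _
    refine Submodule.mem_sup.mpr ⟨↑(r x), (r x).2, x - ↑(r x), ?_, add_sub_cancel _ _⟩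
    have h2 := hr (r x)
    simp only [LinearMap.id_coe, id_eq] at h2
    rw [LinearMap.mem_ker, map_sub, show r ((r x : D')) = r x from h2, sub_self]

lemma smul_combine_eq_zero {D' : Type} [AddCommGroup D'] [Module ZQZ D']
    (x : D') (a b : ℤ) (hcop : IsCoprime a b)
    (ha : (TrivSqZeroExt.inl a : ZQZ) • x = 0) (hb : (TrivSqZeroExt.inl b : ZQZ) • x = 0) :
    x = 0 := by
  obtain ⟨s, t, hst⟩ := hcop
  have h1 : (TrivSqZeroExt.inl (s * a + t * b) : ZQZ) • x = 0 := by
    rw [TrivSqZeroExt.inl_add, TrivSqZeroExt.inl_mul, TrivSqZeroExt.inl_mul, add_smul,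
      mul_smul, mul_smul, ha, hb, smul_zero, smul_zero, add_zero]
  rwa [hst, TrivSqZeroExt.inl_one, one_smul] at h1

lemma smul_ne_zero_of_not_dvd {p : ℕ} (hp : p.Prime) {D' : Type} [AddCommGroup D']
    [Module ZQZ D'] (t : D') (hann : ∀ r : ZQZ, (p : ℤ) ∣ r.fst → r • t = 0)
    (m : ℤ) (hm : ¬ ((p : ℤ) ∣ m)) (ht : t ≠ 0) :
    (TrivSqZeroExt.inl m : ZQZ) • t ≠ 0 := by
  intro h0
  have hcop : IsCoprime (m : ℤ) ((p:ℤ)) :=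
    ((Nat.prime_iff_prime_int.mp hp).coprime_iff_not_dvd.mpr hm).symm
  exact ht (smul_combine_eq_zero t m (p:ℤ) hcop h0
    (hann _ (by rw [TrivSqZeroExt.fst_inl])))

lemma smul_F₀_eq_zero {p : ℕ} (hp : p.Prime) (r : ZQZ) (hr : (p : ℤ) ∣ r.fst) :
    r • F₀ p = (0 : H) := by
  ext z
  rw [smul_H_apply, F₀_apply, TrivSqZeroExt.fst_mul, mul_smul,
    (smul_oinv_eq_zero hp _).mpr hr, smul_zero, AddMonoidHom.zero_apply]

set_option synthInstance.maxHeartbeats 1000000 in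
set_option maxHeartbeats 2000000 in
lemma main_contra {D' : Type} [AddCommGroup D'] [Module ZQZ D']
    (hinj : Module.Injective ZQZ D')
    (hindec : ∀ A B : Submodule ZQZ D', IsCompl A B → A = ⊥ ∨ B = ⊥)
    {p q : ℕ} (hp : p.Prime) (hq : q.Prime) (hpq : p ≠ q)
    (tp tq : D') (htp : tp ≠ 0) (htq : tq ≠ 0)
    (hann_p : ∀ r : ZQZ, (p : ℤ) ∣ r.fst → r • tp = 0)
    (hann_q : ∀ r : ZQZ, (q : ℤ) ∣ r.fst → r • tq = 0) : False := by
  classical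
  set Pp : Ideal ZQZ := Ideal.comap (TrivSqZeroExt.fstHom ℤ ℤ QZmod)
    (Ideal.span {(p : ℤ)}) with hPp
  have hmemPp : ∀ r : ZQZ, r ∈ Pp ↔ (p : ℤ) ∣ r.fst := by
    intro r
    rw [hPp, Ideal.mem_comap, Ideal.mem_span_singleton]
    rfl
  set Fs : ↥(Wp p) := ⟨F₀ p, F₀_mem_Wp hp⟩ with hFs
  have hker_τ : Pp ≤ LinearMap.ker (LinearMap.toSpanSingleton ZQZ ↥(Wp p) Fs) := by
    intro r hr
    rw [LinearMap.mem_ker, LinearMap.toSpanSingleton_apply]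
    apply Subtype.ext
    rw [Submodule.coe_smul]
    exact smul_F₀_eq_zero hp r ((hmemPp r).mp hr)
  set τ : (ZQZ ⧸ Pp) →ₗ[ZQZ] ↥(Wp p) :=
    Submodule.liftQ (R₂ := ZQZ) (M₂ := ↥(Wp p)) (τ₁₂ := RingHom.id ZQZ) Pp
      (LinearMap.toSpanSingleton ZQZ ↥(Wp p) Fs) hker_τ with hτ
  have hτinj : Function.Injective τ := by
    rw [← LinearMap.ker_eq_bot (R := ZQZ) (R₂ := ZQZ) (M := ZQZ ⧸ Pp) (M₂ := ↥(Wp p))]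
    apply Submodule.ker_liftQ_eq_bot
    intro r hr
    rw [LinearMap.mem_ker, LinearMap.toSpanSingleton_apply] at hr
    rw [hmemPp]
    have h1 : ((r • Fs : ↥(Wp p)) : H) 1 = 0 := by rw [hr]; rfl
    rw [Submodule.coe_smul] at h1
    rw [smul_H_apply, F₀_apply, one_mul] at h1
    exact (smul_oinv_eq_zero hp _).mp h1
  have hker_ρ : Pp ≤ LinearMap.ker (LinearMap.toSpanSingleton ZQZ D' tp) := by
    intro r hr
    rw [LinearMap.mem_ker, LinearMap.toSpanSingleton_apply]
    exact hann_p r ((hmemPp r).mp hr)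
  set ρ : (ZQZ ⧸ Pp) →ₗ[ZQZ] D' :=
    Submodule.liftQ Pp (LinearMap.toSpanSingleton ZQZ D' tp) hker_ρ with hρ
  obtain ⟨h, hh⟩ := hinj.out (X := ZQZ ⧸ Pp) (Y := ↥(Wp p)) τ hτinj ρ
  have hFtp : h Fs = tp := by
    have h1 : τ (Submodule.Quotient.mk 1) = Fs := by
      rw [hτ, Submodule.liftQ_apply, LinearMap.toSpanSingleton_apply, one_smul]
    have h2 := hh (Submodule.Quotient.mk 1)
    rw [h1] at h2
    rw [h2, hρ, Submodule.liftQ_apply, LinearMap.toSpanSingleton_apply, one_smul]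
  have hker_h : ∀ F : ↥(Wp p), h F = 0 → F = 0 := by
    intro F h0
    by_contra hFne
    obtain ⟨r, m, hm, hrF⟩ := essential_Wp hp (F : H) F.2
      (fun hc => hFne (Subtype.ext hc))
    have hsub : r • F = (TrivSqZeroExt.inl m : ZQZ) • Fs :=
      Subtype.ext (by rw [Submodule.coe_smul, Submodule.coe_smul]; exact hrF)
    have : (TrivSqZeroExt.inl m : ZQZ) • tp = 0 := by
      rw [← hFtp, ← map_smul, ← hsub, map_smul, h0, smul_zero]
    exact smul_ne_zero_of_not_dvd hp tp hann_p m hm htp this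
  have hinjh : Function.Injective h := by
    intro a b hab
    have := hker_h (a - b) (by rw [show h (a - b) = h a - h b from map_sub h a b, hab, sub_self])
    exact sub_eq_zero.mp this
  set S : Submodule ZQZ D' := LinearMap.range h with hS
  have hSinj : Module.Injective ZQZ ↥S :=
    inj_equiv (LinearEquiv.ofInjective h hinjh) (injective_Wp hp)
  obtain ⟨K, hK⟩ := compl_of_injective S hSinj
  rcases hindec S K hK with hSbot | hKbot
  · apply htp
    have htpS : tp ∈ S := ⟨Fs, hFtp⟩
    rw [hSbot] at htpS
    simpa using htpS
  · have hStop : S = ⊤ := by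
      have := hK.sup_eq_top
      rwa [hKbot, sup_bot_eq] at this
    have htqS : tq ∈ S := by rw [hStop]; trivial
    obtain ⟨F', hF'⟩ := htqS
    have hF'ne : F' ≠ 0 := fun h0 => htq (by rw [← hF', h0, map_zero])
    obtain ⟨r, m, hm, hrF⟩ := essential_Wp hp (F' : H) F'.2
      (fun hc => hF'ne (Subtype.ext hc))
    have hsub : r • F' = (TrivSqZeroExt.inl m : ZQZ) • Fs :=
      Subtype.ext (by rw [Submodule.coe_smul, Submodule.coe_smul]; exact hrF)
    have heq : r • tq = (TrivSqZeroExt.inl m : ZQZ) • tp := by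
      rw [← hF', ← map_smul, hsub, map_smul, hFtp]
    have hx0 : (TrivSqZeroExt.inl m : ZQZ) • tp ≠ 0 :=
      smul_ne_zero_of_not_dvd hp tp hann_p m hm htp
    have hpx : (TrivSqZeroExt.inl (p : ℤ) : ZQZ) • ((TrivSqZeroExt.inl m : ZQZ) • tp) = 0 := by
      rw [smul_smul, mul_comm, ← smul_smul, hann_p _ (by rw [TrivSqZeroExt.fst_inl]), smul_zero]
    have hqx : (TrivSqZeroExt.inl (q : ℤ) : ZQZ) • ((TrivSqZeroExt.inl m : ZQZ) • tp) = 0 := by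
      rw [← heq, smul_smul, mul_comm, ← smul_smul, hann_q _ (by rw [TrivSqZeroExt.fst_inl]),
        smul_zero]
    have hcop : IsCoprime ((p : ℤ)) ((q : ℤ)) := by
      rw [Int.isCoprime_iff_gcd_eq_one]
      exact_mod_cast (Nat.coprime_primes hp hq).mpr hpq
    exact hx0 (smul_combine_eq_zero _ _ _ hcop hpx hqx)

end Scratch

namespace Scratch

lemma smul_inr (r : ZQZ) (y : QZmod) :
    r • TrivSqZeroExt.inr y = (TrivSqZeroExt.inr (r.fst • y) : ZQZ) := by
  rw [smul_eq_mul]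
  apply TrivSqZeroExt.ext
  · rw [TrivSqZeroExt.fst_mul, TrivSqZeroExt.fst_inr, mul_zero, TrivSqZeroExt.fst_inr]
  · rw [TrivSqZeroExt.snd_mul, TrivSqZeroExt.snd_inr, TrivSqZeroExt.fst_inr, TrivSqZeroExt.snd_inr]
    simp [op_smul_eq_smul]

set_option synthInstance.maxHeartbeats 1000000 in
set_option maxHeartbeats 2000000 in
theorem part3 : ¬ HasFiniteGoldieDimension ZQZ ZQZ := by
  rintro ⟨E, f, ⟨hEinj, hfinj, -⟩, n, D, hInt, hD⟩
  classical
  set e := LinearEquiv.ofBijective (DirectSum.coeLinearMap D) hInt with he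
  set pr : Fin (n + 1) → ℕ := fun j => ((Set.Infinite.natEmbedding _ Nat.infinite_setOf_prime) j.val : ℕ)
    with hpr
  have hprime : ∀ j, (pr j).Prime := fun j => ((Set.Infinite.natEmbedding _ Nat.infinite_setOf_prime) j.val).2
  have hprinj : Function.Injective pr := by
    intro a b hab
    have := (Set.Infinite.natEmbedding _ Nat.infinite_setOf_prime).injective (Subtype.ext hab)
    exact Fin.val_injective this
  set g : Fin (n + 1) → ZQZ := fun j => TrivSqZeroExt.inr (oinv (pr j)) with hg
  have hg0 : ∀ j, g j ≠ 0 := by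
    intro j h
    apply oinv_ne_zero (hprime j)
    have := congrArg TrivSqZeroExt.snd h
    rwa [TrivSqZeroExt.snd_inr, TrivSqZeroExt.snd_zero] at this
  set v : Fin (n + 1) → (DirectSum (Fin n) fun i => ↥(D i)) := fun j => e.symm (f (g j)) with hv
  have hvi : ∀ j, ∃ i, v j i ≠ 0 := by
    intro j
    by_contra hcon
    push_neg at hcon
    have hv0 : v j = 0 := DFinsupp.ext hcon
    have : f (g j) = 0 := by
      have := congrArg e hv0
      rwa [LinearEquiv.apply_symm_apply, map_zero] at this
    exact hg0 j (hfinj (by rwa [map_zero f] ))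
  choose I hI using hvi
  obtain ⟨j, j', hjj', hII⟩ := Fintype.exists_ne_map_eq_of_card_lt I (by simp)
  -- annihilation
  have hann : ∀ (j₀ : Fin (n + 1)) (i₀ : Fin n) (r : ZQZ), ((pr j₀ : ℤ)) ∣ r.fst →
      r • (v j₀ i₀) = 0 := by
    intro j₀ i₀ r hr
    have h1 : r • g j₀ = 0 := by
      rw [hg]
      rw [smul_inr, (smul_oinv_eq_zero (hprime j₀) _).mpr hr]
      exact TrivSqZeroExt.inr_zero ℤ
    have h2 : r • v j₀ = 0 := by
      rw [hv]
      show r • e.symm (f (g j₀)) = 0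
      rw [← map_smul e.symm, ← map_smul f, h1, map_zero f, map_zero]
    calc r • (v j₀ i₀) = (r • v j₀) i₀ := (DFinsupp.smul_apply r (v j₀) i₀).symm
      _ = 0 := by rw [h2]; rfl
  have htq : v j' (I j) ≠ 0 := by rw [hII]; exact hI j'
  have hann_q : ∀ r : ZQZ, ((pr j' : ℤ)) ∣ r.fst → r • (v j' (I j)) = 0 := by
    intro r hr
    rw [hII]
    exact hann j' (I j') r hr
  exact main_contra (hD (I j)).1 (hD (I j)).2.2 (hprime j) (hprime j')
    (fun h => hjj' (hprinj h)) (v j (I j)) (v j' (I j)) (hI j) htq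
    (hann j (I j)) hann_q

end Scratch


/-- The trivial extension `R = ℤ ⋉ ℚ/ℤ` is an arithmetical ring, its unique
minimal prime is `N = 0 ⋉ ℚ/ℤ` (the kernel of the first projection), and `R` does not have
finite Goldie dimension as a module over itself. -/
theorem trivSqZeroExt_int_ratModInt :
    IsArithmetical ZQZ ∧
      minimalPrimes ZQZ = {RingHom.ker (TrivSqZeroExt.fstHom ℤ ℤ QZmod)} ∧
      ¬ HasFiniteGoldieDimension ZQZ ZQZ :=
  ⟨Scratch4.arithmetical, Scratch.minimalPrimes_eq, Scratch.part3⟩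
end

section
/- Let R be an integral domain of finite character. For each maximal ideal P of R, let T_(P) be a torsion R_P-module (viewed as an R-module). Then the torsion submodule of the product ∏_{P ∈ Max R} T_(P) is the direct sum ⊕_{P ∈ Max R} T_(P). -/
universe u

/-- Let `R` be a domain of finite character and, for each maximal ideal
`P`, let `T P` be a torsion `R_P`-module (viewed as an `R`-module).  Then the torsion
submodule of the product `∏_P T P` is the direct sum `⊕_P T P`, i.e. it consists exactly of
the elements of finite support. -/
theorem torsion_submodule_of_pi_eq_directSum (R : Type u) [CommRing R] [IsDomain R]
    (hfc : FiniteCharacter R)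
    (T : MaximalSpectrum R → Type u)
    [∀ P, AddCommGroup (T P)] [∀ P, Module R (T P)]
    [∀ P, Module (Localization.AtPrime P.asIdeal) (T P)]
    [∀ P, IsScalarTower R (Localization.AtPrime P.asIdeal) (T P)]
    (htor : ∀ P, Module.IsTorsion (Localization.AtPrime P.asIdeal) (T P)) :
    ∀ f : (∀ P, T P), f ∈ Submodule.torsion R (∀ P, T P) ↔ {P | f P ≠ 0}.Finite := by
  intro f
  constructor
  · rintro ⟨⟨r, hr⟩, hrf⟩
    have hr0 : r ≠ 0 := nonZeroDivisors.ne_zero hr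
    apply ((hfc r hr0).preimage (f := MaximalSpectrum.asIdeal)
      (Set.injOn_of_injective (fun P Q h => MaximalSpectrum.ext h))).subset
    intro P hP
    refine ⟨P.2, ?_⟩
    by_contra hrP
    apply hP
    have hu : IsUnit (algebraMap R (Localization.AtPrime P.asIdeal) r) :=
      IsLocalization.map_units _ (⟨r, hrP⟩ : P.asIdeal.primeCompl)
    have h0 : r • f P = 0 := congrFun hrf P
    rw [← algebraMap_smul (Localization.AtPrime P.asIdeal) r (f P)] at h0
    exact hu.smul_eq_zero.mp h0
  · intro hfin
    classical
    have key : ∀ P : MaximalSpectrum R, ∃ r : R, r ≠ 0 ∧ r • f P = 0 := by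
      intro P
      haveI : IsDomain (Localization.AtPrime P.asIdeal) :=
        IsLocalization.isDomain_of_le_nonZeroDivisors (S := Localization.AtPrime P.asIdeal)
          P.asIdeal.primeCompl_le_nonZeroDivisors
      obtain ⟨⟨a, ha⟩, hafp⟩ := htor P (x := f P)
      have ha0 : a ≠ 0 := nonZeroDivisors.ne_zero ha
      have hafp' : a • f P = 0 := hafp
      obtain ⟨⟨r, m⟩, hrm⟩ := IsLocalization.surj (M := P.asIdeal.primeCompl) (S := Localization.AtPrime P.asIdeal) a
      have hinj : Function.Injective (algebraMap R (Localization.AtPrime P.asIdeal)) :=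
        IsLocalization.injective _ P.asIdeal.primeCompl_le_nonZeroDivisors
      have hm0 : algebraMap R (Localization.AtPrime P.asIdeal) (m : R) ≠ 0 := by
        intro h
        have hm : (m : R) = 0 := hinj (by rw [h, map_zero])
        exact m.2 (hm ▸ P.asIdeal.zero_mem)
      refine ⟨r, ?_, ?_⟩
      · intro h
        rw [h, map_zero] at hrm
        rcases mul_eq_zero.mp hrm with h1 | h2
        · exact ha0 h1
        · exact hm0 h2
      · have : r • f P = (algebraMap R (Localization.AtPrime P.asIdeal) r) • f P :=
          (algebraMap_smul _ r (f P)).symm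
        rw [this, ← hrm, mul_comm, mul_smul, hafp', smul_zero]
    choose r hr0 hrkill using key
    set S := hfin.toFinset with hS
    refine ⟨⟨∏ P ∈ S, r P, mem_nonZeroDivisors_of_ne_zero
      (Finset.prod_ne_zero_iff.mpr fun P _ => hr0 P)⟩, ?_⟩
    funext P
    show (∏ Q ∈ S, r Q) • f P = 0
    by_cases hP : f P = 0
    · rw [hP, smul_zero]
    · have hPS : P ∈ S := hfin.mem_toFinset.mpr hP
      rw [← Finset.mul_prod_erase S r hPS, mul_comm, mul_smul, hrkill, smul_zero]
end

section
/- Let R be a Prüfer domain of finite character. For each maximal ideal P of R, let F_(P) be an injective R_P-module, and let F = ∏_{P ∈ Max R} F_(P), viewed as an R-module. Then for every multiplicative subset S of R, the localization S^{-1}F is an injective R-module. -/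
universe u

section LocalPart

set_option linter.unusedSectionVars false

variable {V : Type u} [CommRing V] [IsDomain V]
variable {E : Type u} [AddCommGroup E] [Module V E]

def torsionS (S' : Submonoid V) (E : Type u) [AddCommGroup E] [Module V E] :
    Submodule V E where
  carrier := {x | ∃ s ∈ S', s • x = 0}
  zero_mem' := ⟨1, S'.one_mem, smul_zero _⟩
  add_mem' := by
    rintro x y ⟨s, hs, hsx⟩ ⟨t, ht, hty⟩
    refine ⟨s * t, S'.mul_mem hs ht, ?_⟩
    rw [smul_add, show (s * t) • x = t • s • x by rw [smul_smul, mul_comm], hsx, smul_zero,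
      show (s * t) • y = s • t • y from (smul_smul s t y).symm, hty, smul_zero, add_zero]
  smul_mem' := by
    rintro c x ⟨s, hs, hsx⟩
    exact ⟨s, hs, by rw [smul_comm, hsx, smul_zero]⟩

lemma mem_torsionS {S' : Submonoid V} {x : E} : x ∈ torsionS S' E ↔ ∃ s ∈ S', s • x = 0 :=
  Iff.rfl

lemma exists_smul_eq_of_injective (hE : Module.Injective V E) {r : V} (hr : r ≠ 0) (x : E) :
    ∃ y : E, r • y = x := by
  have hinj : Function.Injective (r • (LinearMap.id : V →ₗ[V] V)) := by
    intro a b hab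
    simp only [LinearMap.smul_apply, LinearMap.id_coe, id_eq, smul_eq_mul] at hab
    exact mul_left_cancel₀ hr hab
  obtain ⟨h, hh⟩ := hE.out (r • (LinearMap.id : V →ₗ[V] V)) hinj
    (LinearMap.toSpanSingleton V E x)
  refine ⟨h 1, ?_⟩
  have h1 := hh 1
  simp only [LinearMap.smul_apply, LinearMap.id_coe, id_eq, smul_eq_mul, mul_one,
    LinearMap.toSpanSingleton_apply, one_smul] at h1
  calc r • h 1 = h (r • 1) := (map_smul h r 1).symm
  _ = h r := by rw [smul_eq_mul, mul_one]
  _ = x := h1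

lemma exists_smul_eq_quot (hE : Module.Injective V E) (S' : Submonoid V) {r : V} (hr : r ≠ 0)
    (ξ : E ⧸ torsionS S' E) : ∃ ζ, r • ζ = ξ := by
  obtain ⟨e, rfl⟩ := Submodule.Quotient.mk_surjective _ ξ
  obtain ⟨y, hy⟩ := exists_smul_eq_of_injective hE hr e
  exact ⟨Submodule.Quotient.mk y, by rw [← Submodule.Quotient.mk_smul, hy]⟩

def satCompl (hchain : ∀ a b : V, a ∣ b ∨ b ∣ a) (S' : Submonoid V) (h0 : (0 : V) ∉ S') :
    Ideal V where
  carrier := {v | ∀ w, v * w ∉ S'}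
  zero_mem' := fun w hw => h0 (by simpa using hw)
  add_mem' := by
    rintro v₁ v₂ h1 h2 w hw
    rcases hchain v₁ v₂ with ⟨c, rfl⟩ | ⟨c, rfl⟩
    · exact h1 ((1 + c) * w) (by rw [show v₁ * ((1 + c) * w) = (v₁ + v₁ * c) * w by ring]; exact hw)
    · exact h2 ((c + 1) * w) (by rw [show v₂ * ((c + 1) * w) = (v₂ * c + v₂) * w by ring]; exact hw)
  smul_mem' := by
    rintro c v h w hw
    exact h (c * w) (by rw [show v * (c * w) = c • v * w by rw [smul_eq_mul]; ring]; exact hw)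

lemma mem_satCompl {hchain : ∀ a b : V, a ∣ b ∨ b ∣ a} {S' : Submonoid V} {h0 : (0 : V) ∉ S'}
    {v : V} : v ∈ satCompl hchain S' h0 ↔ ∀ w, v * w ∉ S' :=
  Iff.rfl

lemma p_smul_torsion (hchain : ∀ a b : V, a ∣ b ∨ b ∣ a) {S' : Submonoid V} (h0 : (0 : V) ∉ S')
    {q : V} (hq : q ∈ satCompl hchain S' h0) {x : E} (hx : x ∈ torsionS S' E) : q • x = 0 := by
  obtain ⟨s, hs, hsx⟩ := hx
  rcases hchain s q with ⟨c, rfl⟩ | ⟨c, rfl⟩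
  · rw [mul_comm, mul_smul, hsx, smul_zero]
  · exact absurd hs (mem_satCompl.mp hq c)

lemma eq_zero_of_smul_eq_zero (hchain : ∀ a b : V, a ∣ b ∨ b ∣ a) {S' : Submonoid V}
    (h0 : (0 : V) ∉ S') {u : V} (hu : u ∉ satCompl hchain S' h0)
    {ξ : E ⧸ torsionS S' E} (hξ : u • ξ = 0) : ξ = 0 := by
  obtain ⟨e, rfl⟩ := Submodule.Quotient.mk_surjective _ ξ
  rw [← Submodule.Quotient.mk_smul, Submodule.Quotient.mk_eq_zero] at hξ
  obtain ⟨s, hs, hsue⟩ := hξ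
  have hu' : ¬ ∀ w, u * w ∉ S' := fun h => hu (mem_satCompl.mpr h)
  push_neg at hu'
  obtain ⟨w, hw⟩ := hu'
  rw [Submodule.Quotient.mk_eq_zero]
  refine ⟨s * (u * w), S'.mul_mem hs hw, ?_⟩
  rw [show s * (u * w) = w * (s * u) by ring, mul_smul, mul_smul, hsue, smul_zero]

/-- Key local theorem: the quotient of an injective module over a valuation domain by the
`S'`-torsion submodule satisfies Baer's criterion. -/
theorem local_baer (hchain : ∀ a b : V, a ∣ b ∨ b ∣ a) (hE : Module.Injective V E)
    (S' : Submonoid V) (h0 : (0 : V) ∉ S') :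
    Module.Baer V (E ⧸ torsionS S' E) := by
  classical
  set T := torsionS S' E with hT
  set p := satCompl hchain S' h0 with hp
  intro J f
  suffices h : ∃ ζ, ∀ (x : V) (mem : x ∈ J), x • ζ = f ⟨x, mem⟩ by
    obtain ⟨ζ, hζ⟩ := h
    exact ⟨LinearMap.toSpanSingleton V _ ζ, fun x mem => by
      rw [LinearMap.toSpanSingleton_apply]; exact hζ x mem⟩
  by_cases hJp : ∃ s ∈ J, s ∉ p
  · obtain ⟨s, hsJ, hsp⟩ := hJp
    have hs0 : s ≠ 0 := fun h => hsp (h ▸ p.zero_mem)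
    obtain ⟨ζ, hζ⟩ := exists_smul_eq_quot hE S' hs0 (f ⟨s, hsJ⟩)
    refine ⟨ζ, fun a ha => ?_⟩
    have key : s • (a • ζ - f ⟨a, ha⟩) = 0 := by
      rw [smul_sub, smul_comm s a, hζ,
        show a • f ⟨s, hsJ⟩ = f (a • ⟨s, hsJ⟩) from (map_smul f a _).symm,
        show s • f ⟨a, ha⟩ = f (s • ⟨a, ha⟩) from (map_smul f s _).symm,
        show a • (⟨s, hsJ⟩ : J) = s • (⟨a, ha⟩ : J) from Subtype.ext
          (by simp [smul_eq_mul, mul_comm]), sub_self]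
    have := eq_zero_of_smul_eq_zero hchain h0 hsp key
    rwa [sub_eq_zero] at this
  · push_neg at hJp
    have hlift := Submodule.Quotient.mk_surjective T
    choose e he using fun a : J => hlift (f a)
    set K : Ideal V := p * J with hK
    have hrep : ∀ z ∈ K, ∃ q b, q ∈ p ∧ b ∈ J ∧ z = q * b := by
      intro z hz
      refine Submodule.mul_induction_on hz (fun m hm n hn => ⟨m, n, hm, hn, rfl⟩) ?_
      rintro x y ⟨q₁, b₁, hq₁, hb₁, rfl⟩ ⟨q₂, b₂, hq₂, hb₂, rfl⟩
      rcases hchain b₁ b₂ with ⟨c, rfl⟩ | ⟨c, rfl⟩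
      · exact ⟨q₁ + q₂ * c, b₁, p.add_mem hq₁ (Ideal.mul_mem_right c p hq₂), hb₁, by ring⟩
      · exact ⟨q₁ * c + q₂, b₂, p.add_mem (Ideal.mul_mem_right c p hq₁) hq₂, hb₂, by ring⟩
    have wd : ∀ (q b : V) (hq : q ∈ p) (hb : b ∈ J) (q' b' : V) (hq' : q' ∈ p) (hb' : b' ∈ J),
        q * b = q' * b' → q • e ⟨b, hb⟩ = q' • e ⟨b', hb'⟩ := by
      have main : ∀ (q b : V) (hq : q ∈ p) (hb : b ∈ J) (q' b' : V) (hq' : q' ∈ p)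
          (hb' : b' ∈ J) (c : V), b' = b * c → q * b = q' * b' →
          q • e ⟨b, hb⟩ = q' • e ⟨b', hb'⟩ := by
        intro q b hq hb q' b' hq' hb' c hc hqb
        by_cases hb0 : b = 0
        · subst hb0
          have h1 : e ⟨0, hb⟩ ∈ T := by
            have h1' := he ⟨0, hb⟩
            rw [show (⟨(0 : V), hb⟩ : J) = 0 from Subtype.ext rfl, map_zero] at h1'
            exact (Submodule.Quotient.mk_eq_zero T).mp h1'
          have hb'eq : b' = 0 := by rw [hc, zero_mul]
          subst hb'eq
          have h2 : e ⟨0, hb'⟩ ∈ T := by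
            have h2' := he ⟨0, hb'⟩
            rw [show (⟨(0 : V), hb'⟩ : J) = 0 from Subtype.ext rfl, map_zero] at h2'
            exact (Submodule.Quotient.mk_eq_zero T).mp h2'
          rw [p_smul_torsion hchain h0 hq h1, p_smul_torsion hchain h0 hq' h2]
        · have hqc : q = q' * c := by
            apply mul_right_cancel₀ hb0
            rw [hqb, hc]; ring
          have hTmem : e ⟨b', hb'⟩ - c • e ⟨b, hb⟩ ∈ T := by
            rw [← Submodule.Quotient.mk_eq_zero, Submodule.Quotient.mk_sub,
              Submodule.Quotient.mk_smul, he, he,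
              show c • f ⟨b, hb⟩ = f (c • ⟨b, hb⟩) from (map_smul f c _).symm,
              show (⟨b', hb'⟩ : J) = c • ⟨b, hb⟩ from Subtype.ext
                (by simp [smul_eq_mul, hc, mul_comm]), sub_self]
          have hz := p_smul_torsion hchain h0 hq' hTmem
          rw [smul_sub, sub_eq_zero] at hz
          rw [hz, smul_smul, ← hqc]
      intro q b hq hb q' b' hq' hb' hqb
      rcases hchain b b' with ⟨c, hc⟩ | ⟨c, hc⟩
      · exact main q b hq hb q' b' hq' hb' c hc hqb
      · exact (main q' b' hq' hb' q b hq hb c hc hqb.symm).symm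
    choose qf bf hqf hbf hzf using fun z : K => hrep z z.2
    set Ψ : K → E := fun z => qf z • e ⟨bf z, hbf z⟩ with hΨdef
    have hΨz : ∀ z : K, Ψ z = qf z • e ⟨bf z, hbf z⟩ := fun z => rfl
    have key : ∀ (z : K) (q b : V) (hq : q ∈ p) (hb : b ∈ J), (z : V) = q * b →
        Ψ z = q • e ⟨b, hb⟩ := fun z q b hq hb hzz =>
      wd (qf z) (bf z) (hqf z) (hbf z) q b hq hb ((hzf z).symm.trans hzz)
    set ψ : K →ₗ[V] E :=
      { toFun := Ψ
        map_add' := by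
          intro z₁ z₂
          rcases hchain (bf z₁) (bf z₂) with ⟨c, hc⟩ | ⟨c, hc⟩
          · have h2 : Ψ z₂ = (qf z₂ * c) • e ⟨bf z₁, hbf z₁⟩ :=
              key z₂ _ (bf z₁) (Ideal.mul_mem_right c p (hqf z₂)) (hbf z₁)
                (by rw [hzf z₂, hc]; ring)
            have h12 : Ψ (z₁ + z₂) = (qf z₁ + qf z₂ * c) • e ⟨bf z₁, hbf z₁⟩ :=
              key (z₁ + z₂) _ (bf z₁)
                (p.add_mem (hqf z₁) (Ideal.mul_mem_right c p (hqf z₂))) (hbf z₁)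
                (by simp only [Submodule.coe_add]; rw [hzf z₁, hzf z₂, hc]; ring)
            rw [h12, hΨz z₁, h2, add_smul]
          · have h1 : Ψ z₁ = (qf z₁ * c) • e ⟨bf z₂, hbf z₂⟩ :=
              key z₁ _ (bf z₂) (Ideal.mul_mem_right c p (hqf z₁)) (hbf z₂)
                (by rw [hzf z₁, hc]; ring)
            have h12 : Ψ (z₁ + z₂) = (qf z₁ * c + qf z₂) • e ⟨bf z₂, hbf z₂⟩ :=
              key (z₁ + z₂) _ (bf z₂)
                (p.add_mem (Ideal.mul_mem_right c p (hqf z₁)) (hqf z₂)) (hbf z₂)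
                (by simp only [Submodule.coe_add]; rw [hzf z₁, hzf z₂, hc]; ring)
            rw [h12, hΨz z₂, h1, add_smul]
        map_smul' := by
          intro r z
          have h1 : Ψ (r • z) = (r * qf z) • e ⟨bf z, hbf z⟩ :=
            key (r • z) _ _ (Ideal.mul_mem_left p r (hqf z)) (hbf z)
              (by simp only [Submodule.coe_smul, smul_eq_mul]; rw [hzf z]; ring)
          show Ψ (r • z) = (RingHom.id V) r • Ψ z
          simp only [RingHom.id_apply]
          rw [h1, mul_smul] } with hψdef
    obtain ⟨h, hh⟩ := hE.out K.subtype (Submodule.injective_subtype K) ψ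
    set estar := h 1 with hestar
    have hqa : ∀ (q : V), q ∈ p → ∀ (a : V) (ha : a ∈ J),
        q • (a • estar - e ⟨a, ha⟩) = 0 := by
      intro q hq a ha
      have hmem : q * a ∈ K := Ideal.mul_mem_mul hq ha
      have h1 : h (q * a) = q • e ⟨a, ha⟩ := by
        have hx := hh ⟨q * a, hmem⟩
        rw [show K.subtype ⟨q * a, hmem⟩ = q * a from rfl] at hx
        rw [hx, show ψ ⟨q * a, hmem⟩ = Ψ ⟨q * a, hmem⟩ from rfl,
          key ⟨q * a, hmem⟩ q a hq ha rfl]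
      have h2 : (q * a) • estar = h (q * a) := by
        rw [hestar, ← map_smul, smul_eq_mul, mul_one]
      rw [smul_sub, smul_smul, h2, h1, sub_self]
    by_cases hsub : ∀ a ∈ J, a ∈ K
    · refine ⟨Submodule.Quotient.mk estar, fun a ha => ?_⟩
      obtain ⟨q, b, hq, hb, rfl⟩ := hrep a (hsub a ha)
      have hz := hqa q hq b hb
      have hmk : Submodule.Quotient.mk (p := T) (q • (b • estar - e ⟨b, hb⟩)) = 0 := by
        rw [hz, Submodule.Quotient.mk_zero]
      rw [Submodule.Quotient.mk_smul, Submodule.Quotient.mk_sub,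
        Submodule.Quotient.mk_smul, he] at hmk
      rw [smul_sub, sub_eq_zero, smul_smul] at hmk
      rw [hmk, show q • f ⟨b, hb⟩ = f (q • ⟨b, hb⟩) from (map_smul f q _).symm]
      congr 1
    · push_neg at hsub
      obtain ⟨a₀, ha₀J, ha₀K⟩ := hsub
      have ha₀0 : a₀ ≠ 0 := fun h => ha₀K (h ▸ K.zero_mem)
      obtain ⟨ζ₀, hζ₀⟩ := exists_smul_eq_quot hE S' ha₀0
        (a₀ • Submodule.Quotient.mk (p := T) estar - f ⟨a₀, ha₀J⟩)
      refine ⟨Submodule.Quotient.mk estar - ζ₀, fun a ha => ?_⟩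
      have goal2 : a • ζ₀ = a • Submodule.Quotient.mk (p := T) estar - f ⟨a, ha⟩ := by
        rcases hchain a₀ a with ⟨c, hc⟩ | ⟨c, hc⟩
        · -- a = a₀ * c
          rw [show a • ζ₀ = c • (a₀ • ζ₀) by rw [smul_smul, mul_comm, ← hc], hζ₀, smul_sub,
            smul_smul, mul_comm c a₀, ← hc,
            show c • f ⟨a₀, ha₀J⟩ = f (c • ⟨a₀, ha₀J⟩) from (map_smul f c _).symm,
            show c • (⟨a₀, ha₀J⟩ : J) = ⟨a, ha⟩ from Subtype.ext
              (by simp only [SetLike.mk_smul_mk, smul_eq_mul]; rw [hc, mul_comm])]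
        · -- a₀ = a * c
          have hcp : c ∉ p := fun hcP =>
            ha₀K (by rw [hc, mul_comm]; exact Ideal.mul_mem_mul hcP ha)
          have hkey : c • (a • ζ₀ - (a • Submodule.Quotient.mk (p := T) estar
              - f ⟨a, ha⟩)) = 0 := by
            rw [smul_sub, smul_sub, smul_smul, mul_comm c a, ← hc, hζ₀, smul_smul,
              mul_comm c a, ← hc,
              show c • f ⟨a, ha⟩ = f (c • ⟨a, ha⟩) from (map_smul f c _).symm,
              show c • (⟨a, ha⟩ : J) = ⟨a₀, ha₀J⟩ from Subtype.ext
                (by simp only [SetLike.mk_smul_mk, smul_eq_mul]; rw [hc, mul_comm]),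
              sub_self]
          have := eq_zero_of_smul_eq_zero hchain h0 hcp hkey
          rwa [sub_eq_zero] at this
      rw [smul_sub, goal2]
      abel

end LocalPart



lemma injective_of_equiv {R : Type u} [CommRing R] {M N : Type u}
    [AddCommGroup M] [Module R M] [AddCommGroup N] [Module R N]
    (e : M ≃ₗ[R] N) (hM : Module.Injective R M) : Module.Injective R N := by
  refine ⟨fun X Y _ _ _ _ i hi g => ?_⟩
  obtain ⟨h, hh⟩ := hM.out i hi ((e.symm : N →ₗ[R] M).comp g)
  refine ⟨(e : M →ₗ[R] N).comp h, fun x => ?_⟩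
  simp only [LinearMap.coe_comp, Function.comp_apply, LinearEquiv.coe_coe] at hh ⊢
  rw [hh x, e.apply_symm_apply]

/-- If `W` is an injective module over a flat `R`-algebra `A`, then any `R`-linear map from an
ideal of `R` to `W` is given by multiplication by an element of `W`. -/
lemma exists_point_of_loc_inj {R : Type u} [CommRing R] (A : Type u) [CommRing A] [Algebra R A]
    [Module.Flat R A] (W : Type u) [AddCommGroup W] [Module R W] [Module A W]
    [IsScalarTower R A W] (hW : Module.Injective A W) (J : Ideal R) (f : J →ₗ[R] W) :
    ∃ ζ : W, ∀ (a : R) (ha : a ∈ J), f ⟨a, ha⟩ = a • ζ := by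
  haveI : SMulCommClass R A W := ⟨fun r a w => by
    rw [← smul_assoc, Algebra.smul_def, mul_comm, mul_smul, algebraMap_smul]⟩
  let bil : A →ₗ[A] (J →ₗ[R] W) :=
    { toFun := fun w => w • f
      map_add' := fun x y => add_smul x y f
      map_smul' := fun a x => by simp only [RingHom.id_apply, smul_eq_mul, mul_smul] }
  let g0 : TensorProduct R A J →ₗ[A] W := TensorProduct.AlgebraTensorModule.lift bil
  let ι : TensorProduct R A J →ₗ[A] TensorProduct R A R := LinearMap.baseChange A J.subtype
  have hι : Function.Injective ι := by
    have : (ι : TensorProduct R A J → TensorProduct R A R)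
        = LinearMap.lTensor A J.subtype := by
      rfl
    rw [this]
    exact Module.Flat.lTensor_preserves_injective_linearMap J.subtype
      (Submodule.injective_subtype J)
  let rid := (Algebra.TensorProduct.rid R A A).toLinearEquiv
  let ι2 : TensorProduct R A J →ₗ[A] A := (rid : TensorProduct R A R →ₗ[A] A).comp ι
  have hι2 : Function.Injective ι2 := by
    simp only [ι2, LinearMap.coe_comp, LinearEquiv.coe_coe]
    exact rid.injective.comp hι
  obtain ⟨h, hh⟩ := hW.out ι2 hι2 g0
  refine ⟨h 1, fun a ha => ?_⟩
  have h1 := hh ((1 : A) ⊗ₜ[R] (⟨a, ha⟩ : J))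
  have h2 : ι2 ((1 : A) ⊗ₜ[R] (⟨a, ha⟩ : J)) = a • (1 : A) := by
    simp only [ι2, ι, LinearMap.coe_comp, Function.comp_apply, LinearMap.baseChange_tmul,
      LinearEquiv.coe_coe]
    simp only [rid, Submodule.coe_subtype, AlgEquiv.toLinearEquiv_apply,
      Algebra.TensorProduct.rid_tmul]
  have h3 : g0 ((1 : A) ⊗ₜ[R] (⟨a, ha⟩ : J)) = f ⟨a, ha⟩ := by
    simp only [g0, TensorProduct.AlgebraTensorModule.lift_tmul]
    simp only [bil, LinearMap.coe_mk, AddHom.coe_mk, LinearMap.smul_apply, one_smul]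
  rw [h2] at h1
  rw [← h3, ← h1, LinearMap.map_smul_of_tower]

/-- Let `R` be a Prüfer domain of finite character and, for each maximal
ideal `P`, let `F P` be an injective `R_P`-module; let `F = ∏_P F P`.  Then `S⁻¹F` is an
injective `R`-module for every multiplicative subset `S` of `R`. -/
theorem localization_injective_of_pi_of_injective (R : Type u) [CommRing R] [IsDomain R]
    (hprufer : IsArithmetical R) (hfc : FiniteCharacter R)
    (F : MaximalSpectrum R → Type u)
    [∀ P, AddCommGroup (F P)] [∀ P, Module R (F P)]
    [∀ P, Module (Localization.AtPrime P.asIdeal) (F P)]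
    [∀ P, IsScalarTower R (Localization.AtPrime P.asIdeal) (F P)]
    (hinj : ∀ P, Module.Injective (Localization.AtPrime P.asIdeal) (F P))
    (S : Submonoid R) :
    Module.Injective R (LocalizedModule S (∀ P, F P)) := by
  classical
  by_cases h0 : (0 : R) ∈ S
  · haveI : Subsingleton (LocalizedModule S (∀ P, F P)) := by
      constructor
      intro x y
      induction x using LocalizedModule.induction_on with | _ mx sx =>
      induction y using LocalizedModule.induction_on with | _ my sy =>
      rw [LocalizedModule.mk_eq]
      exact ⟨⟨0, h0⟩, by simp⟩
    exact ⟨fun X Y _ _ _ _ i hi g => ⟨0, fun x => Subsingleton.elim _ _⟩⟩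
  have hchain : ∀ P : MaximalSpectrum R,
      ∀ a b : Localization.AtPrime P.asIdeal, a ∣ b ∨ b ∣ a := by
    intro P a b
    rcases hprufer P.asIdeal P.isMaximal (Ideal.span {a}) (Ideal.span {b}) with h | h
    · exact Or.inr (Ideal.span_singleton_le_span_singleton.mp h)
    · exact Or.inl (Ideal.span_singleton_le_span_singleton.mp h)
  have halgInj : ∀ P : MaximalSpectrum R,
      Function.Injective (algebraMap R (Localization.AtPrime P.asIdeal)) := fun P =>
    IsLocalization.injective _ P.asIdeal.primeCompl_le_nonZeroDivisors
  have hS'0 : ∀ P : MaximalSpectrum R,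
      (0 : Localization.AtPrime P.asIdeal) ∉ S.map (algebraMap R (Localization.AtPrime P.asIdeal)) := by
    rintro P ⟨s, hs, hs0⟩
    have hsz : s = 0 := halgInj P (by rw [hs0, map_zero])
    exact h0 (hsz ▸ hs)
  -- torsion membership transfer
  have hTPmem : ∀ (P : MaximalSpectrum R) (x : F P),
      x ∈ torsionS (S.map (algebraMap R (Localization.AtPrime P.asIdeal))) (F P) ↔
        ∃ s : S, (s : R) • x = 0 := by
    intro P x
    constructor
    · rintro ⟨s', ⟨s, hs, rfl⟩, h⟩
      exact ⟨⟨s, hs⟩, by rwa [algebraMap_smul] at h⟩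
    · rintro ⟨s, h⟩
      exact ⟨algebraMap R _ s, ⟨(s : R), s.2, rfl⟩, by rwa [algebraMap_smul]⟩
  -- local injectivity of the torsion quotients
  have hQinj : ∀ P : MaximalSpectrum R, Module.Injective (Localization.AtPrime P.asIdeal)
      (F P ⧸ torsionS (S.map (algebraMap R (Localization.AtPrime P.asIdeal))) (F P)) := fun P =>
    (local_baer (hchain P) (hinj P) _ (hS'0 P)).injective
  -- divisibility of each F P by elements of S
  have hdiv : ∀ (P : MaximalSpectrum R) (s : S) (x : F P), ∃ y, (s : R) • y = x := by
    intro P s x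
    have hs0 : algebraMap R (Localization.AtPrime P.asIdeal) s ≠ 0 := by
      intro h
      have hz : (s : R) = 0 := halgInj P (by rw [h, map_zero])
      exact h0 (hz ▸ s.2)
    obtain ⟨y, hy⟩ := exists_smul_eq_of_injective (hinj P) hs0 x
    exact ⟨y, by rw [← algebraMap_smul (Localization.AtPrime P.asIdeal) (s : R) y]; exact hy⟩
  -- surjectivity of mkLinearMap
  have hsurj : Function.Surjective (LocalizedModule.mkLinearMap S (∀ P, F P)) := by
    intro x
    induction x using LocalizedModule.induction_on with | _ m s =>
    choose y hy using fun P => hdiv P s (m P)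
    refine ⟨y, ?_⟩
    show LocalizedModule.mk y 1 = LocalizedModule.mk m s
    rw [LocalizedModule.mk_eq]
    refine ⟨1, ?_⟩
    simp only [one_smul]
    funext P
    show (s • y) P = m P
    show (s : R) • y P = m P
    exact hy P
  -- kernel of mkLinearMap
  have hker : ∀ x : (∀ P, F P), LocalizedModule.mkLinearMap S (∀ P, F P) x = 0 ↔
      ∃ s : S, (s : R) • x = 0 := by
    intro x
    constructor
    · intro h
      rw [show LocalizedModule.mkLinearMap S (∀ P, F P) x = LocalizedModule.mk x 1 from rfl,
        show (0 : LocalizedModule S (∀ P, F P)) = LocalizedModule.mk 0 1 from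
          (LocalizedModule.zero_mk 1).symm, LocalizedModule.mk_eq] at h
      obtain ⟨u, hu⟩ := h
      simp only [one_smul, smul_zero] at hu
      exact ⟨u, hu⟩
    · rintro ⟨s, hs⟩
      rw [show LocalizedModule.mkLinearMap S (∀ P, F P) x = LocalizedModule.mk x 1 from rfl,
        show (0 : LocalizedModule S (∀ P, F P)) = LocalizedModule.mk 0 1 from
          (LocalizedModule.zero_mk 1).symm, LocalizedModule.mk_eq]
      refine ⟨s, ?_⟩
      simp only [one_smul, smul_zero]
      exact hs
  -- bijectivity of the action of s ∈ S on the local quotients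
  have hQbij : ∀ (P : MaximalSpectrum R) (s : S), Function.Bijective
      (fun ξ : F P ⧸ torsionS (S.map (algebraMap R (Localization.AtPrime P.asIdeal))) (F P) =>
        (s : R) • ξ) := by
    intro P s
    have hzero : ∀ ξ : F P ⧸ torsionS (S.map (algebraMap R (Localization.AtPrime P.asIdeal))) (F P),
        (s : R) • ξ = 0 → ξ = 0 := by
      intro ξ hξ
      obtain ⟨v, rfl⟩ := Submodule.Quotient.mk_surjective _ ξ
      rw [← algebraMap_smul (Localization.AtPrime P.asIdeal) (s : R),
        ← Submodule.Quotient.mk_smul, Submodule.Quotient.mk_eq_zero] at hξ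
      obtain ⟨t', ht', htv⟩ := hξ
      rw [Submodule.Quotient.mk_eq_zero]
      refine ⟨t' * algebraMap R (Localization.AtPrime P.asIdeal) s, ?_, by rw [mul_smul]; exact htv⟩
      exact Submonoid.mul_mem _ ht' ⟨(s : R), s.2, rfl⟩
    constructor
    · intro ξ₁ ξ₂ h12
      have hd : (s : R) • (ξ₁ - ξ₂) = 0 := by
        rw [smul_sub, show (s:R) • ξ₁ = (s:R) • ξ₂ from h12, sub_self]
      have := hzero _ hd
      rwa [sub_eq_zero] at this
    · intro ξ
      obtain ⟨v, rfl⟩ := Submodule.Quotient.mk_surjective _ ξ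
      obtain ⟨y, hy⟩ := hdiv P s v
      refine ⟨Submodule.Quotient.mk y, ?_⟩
      show (s : R) • (Submodule.Quotient.mk y :
        F P ⧸ torsionS (S.map (algebraMap R (Localization.AtPrime P.asIdeal))) (F P)) = _
      rw [← algebraMap_smul (Localization.AtPrime P.asIdeal) (s : R),
        ← Submodule.Quotient.mk_smul, algebraMap_smul, hy]
  have hunit : ∀ (P : MaximalSpectrum R) (s : S), IsUnit (algebraMap R (Module.End R
      (F P ⧸ torsionS (S.map (algebraMap R (Localization.AtPrime P.asIdeal))) (F P))) s) := by
    intro P s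
    rw [Module.End.isUnit_iff]
    have hco : ⇑(algebraMap R (Module.End R
        (F P ⧸ torsionS (S.map (algebraMap R (Localization.AtPrime P.asIdeal))) (F P))) (s : R))
        = fun ξ => (s : R) • ξ := by
      funext ξ
      rfl
    rw [hco]
    exact hQbij P s
  -- the projections
  let uP : ∀ P : MaximalSpectrum R, ((∀ P, F P) →ₗ[R]
      (F P ⧸ torsionS (S.map (algebraMap R (Localization.AtPrime P.asIdeal))) (F P))) := fun P =>
    (LinearMap.restrictScalars R
      (torsionS (S.map (algebraMap R (Localization.AtPrime P.asIdeal))) (F P)).mkQ).comp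
      (LinearMap.proj P)
  let qbar : ∀ P : MaximalSpectrum R, (LocalizedModule S (∀ P, F P) →ₗ[R]
      (F P ⧸ torsionS (S.map (algebraMap R (Localization.AtPrime P.asIdeal))) (F P))) := fun P =>
    LocalizedModule.lift S (uP P) (hunit P)
  have hqbar : ∀ (P : MaximalSpectrum R) (x : ∀ P, F P),
      qbar P (LocalizedModule.mkLinearMap S (∀ P, F P) x) = Submodule.Quotient.mk (x P) := by
    intro P x
    have hc := LinearMap.congr_fun (LocalizedModule.lift_comp S (uP P) (hunit P)) x
    exact hc
  -- Baer's criterion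
  refine Module.Baer.injective ?_
  intro J f
  suffices h : ∃ ζ, ∀ (x : R) (mem : x ∈ J), x • ζ = f ⟨x, mem⟩ by
    obtain ⟨ζ, hζ⟩ := h
    exact ⟨LinearMap.toSpanSingleton R _ ζ, fun x mem => by
      rw [LinearMap.toSpanSingleton_apply]; exact hζ x mem⟩
  by_cases hJ : J = ⊥
  · refine ⟨0, fun x mem => ?_⟩
    have hx0 : (⟨x, mem⟩ : J) = 0 := Subtype.ext (by subst hJ; simpa using mem)
    rw [hx0, map_zero, smul_zero]
  obtain ⟨a₀, ha₀J, ha₀0⟩ := (Submodule.ne_bot_iff J).mp hJ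
  have hBfin : {P : MaximalSpectrum R | a₀ ∈ P.asIdeal}.Finite := by
    have h1 := hfc a₀ ha₀0
    have hinj' : Function.Injective (MaximalSpectrum.asIdeal (R := R)) := fun P Q h => by
      cases P; cases Q; simpa using h
    have hsub : {P : MaximalSpectrum R | a₀ ∈ P.asIdeal}
        ⊆ MaximalSpectrum.asIdeal ⁻¹' {I : Ideal R | I.IsMaximal ∧ a₀ ∈ I} := by
      intro P hP
      exact ⟨P.isMaximal, hP⟩
    exact ((h1.preimage hinj'.injOn).subset hsub)
  -- pointwise solutions on the finitely many primes containing a₀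
  have hwP : ∀ P : MaximalSpectrum R, ∃ w : F P, a₀ ∈ P.asIdeal →
      ∀ (a : R) (ha : a ∈ J), qbar P (f ⟨a, ha⟩) = a • Submodule.Quotient.mk w := by
    intro P
    by_cases hP : a₀ ∈ P.asIdeal
    · obtain ⟨ζ, hζ⟩ := exists_point_of_loc_inj (Localization.AtPrime P.asIdeal)
        (F P ⧸ torsionS (S.map (algebraMap R (Localization.AtPrime P.asIdeal))) (F P))
        (hQinj P) J ((qbar P).comp f)
      obtain ⟨w, hwd⟩ := Submodule.Quotient.mk_surjective _ ζ
      refine ⟨w, fun _ a ha => ?_⟩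
      rw [hwd]
      exact hζ a ha
    · exact ⟨0, fun h => absurd h hP⟩
  choose w hw using hwP
  obtain ⟨y, hy⟩ := hsurj (f ⟨a₀, ha₀J⟩)
  -- the candidate element
  have hzP : ∀ P : MaximalSpectrum R, ∃ zP : F P, (a₀ ∈ P.asIdeal → zP = w P) ∧
      (a₀ ∉ P.asIdeal → a₀ • zP = y P) := by
    intro P
    by_cases hP : a₀ ∈ P.asIdeal
    · exact ⟨w P, fun _ => rfl, fun h => absurd hP h⟩
    · have hu : IsUnit (algebraMap R (Localization.AtPrime P.asIdeal) a₀) :=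
        IsLocalization.map_units _ (⟨a₀, hP⟩ : P.asIdeal.primeCompl)
      refine ⟨((hu.unit⁻¹ : (Localization.AtPrime P.asIdeal)ˣ) : Localization.AtPrime P.asIdeal)
        • y P, fun h => absurd h hP, fun _ => ?_⟩
      have hmul : algebraMap R (Localization.AtPrime P.asIdeal) a₀ *
          ((hu.unit⁻¹ : (Localization.AtPrime P.asIdeal)ˣ) : Localization.AtPrime P.asIdeal)
          = 1 := by
        exact hu.mul_val_inv
      rw [← algebraMap_smul (Localization.AtPrime P.asIdeal) a₀, smul_smul, hmul, one_smul]
  choose z hz1 hz2 using hzP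
  refine ⟨LocalizedModule.mkLinearMap S (∀ P, F P) z, fun a ha => ?_⟩
  obtain ⟨x, hx⟩ := hsurj (f ⟨a, ha⟩)
  -- global torsion killer
  have hglob : ∃ st : S, (st : R) • (a₀ • x - a • y) = 0 := by
    rw [← hker]
    rw [map_sub, map_smul, map_smul, hx, hy, ← map_smul f, ← map_smul f,
      show a₀ • (⟨a, ha⟩ : J) = a • (⟨a₀, ha₀J⟩ : J) from Subtype.ext
        (by simp only [SetLike.mk_smul_mk, smul_eq_mul]; rw [mul_comm]), sub_self]
  obtain ⟨st, hst⟩ := hglob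
  -- per-prime killers on B
  have hsBP : ∀ P : MaximalSpectrum R, ∃ sP : S, a₀ ∈ P.asIdeal →
      (sP : R) • (x P - a • z P) = 0 := by
    intro P
    by_cases hP : a₀ ∈ P.asIdeal
    · have h2 := hw P hP a ha
      rw [← hx, hqbar] at h2
      rw [← hz1 P hP] at h2
      -- h2 : mk (x P) = a • mk (z P)
      have h3 : x P - a • z P ∈
          torsionS (S.map (algebraMap R (Localization.AtPrime P.asIdeal))) (F P) := by
        rw [← Submodule.Quotient.mk_eq_zero, Submodule.Quotient.mk_sub,
          Submodule.Quotient.mk_smul, h2, sub_self]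
      obtain ⟨sP, hsP⟩ := (hTPmem P _).mp h3
      exact ⟨sP, fun _ => hsP⟩
    · exact ⟨1, fun h => absurd h hP⟩
  choose sP hsP using hsBP
  -- combine
  have hfinal : ∃ s : S, (s : R) • (x - a • z) = 0 := by
    refine ⟨st * ∏ P ∈ hBfin.toFinset, sP P, ?_⟩
    have hcoe : ((st * ∏ P ∈ hBfin.toFinset, sP P : S) : R)
        = (st : R) * ∏ P ∈ hBfin.toFinset, (sP P : R) := by
      push_cast
      rfl
    rw [hcoe]
    funext P
    show ((st : R) * ∏ Q ∈ hBfin.toFinset, (sP Q : R)) • (x P - a • z P) = 0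
    by_cases hP : a₀ ∈ P.asIdeal
    · have hPmem : P ∈ hBfin.toFinset := hBfin.mem_toFinset.mpr hP
      rw [show (st : R) * ∏ Q ∈ hBfin.toFinset, (sP Q : R)
          = ((st : R) * ∏ Q ∈ hBfin.toFinset.erase P, (sP Q : R)) * (sP P : R) by
            rw [← Finset.mul_prod_erase _ _ hPmem]; ring,
        mul_smul, hsP P hP, smul_zero]
    · -- use the global killer and invertibility of a₀
      have h5 := congrFun hst P
      simp only [Pi.smul_apply, Pi.sub_apply, Pi.zero_apply] at h5
      rw [← hz2 P hP] at h5
      -- h5 : st • (a₀ • x P - a • a₀ • z P) = 0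
      have h4 : a₀ • ((st : R) • (x P - a • z P)) = 0 := by
        rw [smul_comm a₀ (st : R), smul_sub, smul_comm a₀ a]
        exact h5
      have hu : IsUnit (algebraMap R (Localization.AtPrime P.asIdeal) a₀) :=
        IsLocalization.map_units _ (⟨a₀, hP⟩ : P.asIdeal.primeCompl)
      have hmul : ((hu.unit⁻¹ : (Localization.AtPrime P.asIdeal)ˣ) :
          Localization.AtPrime P.asIdeal) * algebraMap R (Localization.AtPrime P.asIdeal) a₀
          = 1 := by
        exact hu.val_inv_mul
      have h6 : (st : R) • (x P - a • z P) = 0 := by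
        calc (st : R) • (x P - a • z P)
            = (((hu.unit⁻¹ : (Localization.AtPrime P.asIdeal)ˣ) :
                Localization.AtPrime P.asIdeal) *
                algebraMap R (Localization.AtPrime P.asIdeal) a₀) •
                ((st : R) • (x P - a • z P)) := by rw [hmul, one_smul]
          _ = ((hu.unit⁻¹ : (Localization.AtPrime P.asIdeal)ˣ) :
                Localization.AtPrime P.asIdeal) •
                (algebraMap R (Localization.AtPrime P.asIdeal) a₀ •
                ((st : R) • (x P - a • z P))) := mul_smul _ _ _
          _ = 0 := by rw [algebraMap_smul, h4, smul_zero]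
      rw [mul_comm, mul_smul, h6, smul_zero]
  obtain ⟨sfin, hsfin⟩ := hfinal
  have hdiff := (hker (x - a • z)).mpr ⟨sfin, hsfin⟩
  rw [map_sub, sub_eq_zero] at hdiff
  rw [← map_smul, ← hdiff, hx]
end

section
/- Let R be a commutative ring and let G be a nonzero indecomposable injective R-module. Then there exists a maximal ideal P of R such that every element of R \ P acts bijectively on G; in particular, the R-module structure on G extends to an R_P-module structure. -/
universe u

section Aux

variable {R : Type u} [CommRing R] {G : Type u} [AddCommGroup G] [Module R G]

/-- Zorn: there is a maximal submodule containing `X` and meeting `B` trivially. -/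
lemma exists_maximal_disjoint_s19 (X B : Submodule R G) (h : X ⊓ B = ⊥) :
    ∃ C : Submodule R G, Maximal (fun C => X ≤ C ∧ C ⊓ B = ⊥) C := by
  obtain ⟨m, -, hm⟩ := zorn_le_nonempty₀ {C : Submodule R G | X ≤ C ∧ C ⊓ B = ⊥}
    (fun c hcs hchain y hy => by
      refine ⟨sSup c, ⟨((hcs hy).1).trans (le_sSup hy), ?_⟩, fun z hz => le_sSup hz⟩
      rw [eq_bot_iff]
      rintro z ⟨hz1, hz2⟩
      obtain ⟨C', hC', hzC'⟩ := (Submodule.mem_sSup_of_directed ⟨y, hy⟩ hchain.directedOn).mp hz1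
      have : z ∈ C' ⊓ B := ⟨hzC', hz2⟩
      rw [(hcs hC').2] at this
      exact this) X ⟨le_rfl, h⟩
  exact ⟨m, hm⟩

/-- An indecomposable injective module is uniform. -/
lemma uniform_of_indecomposable (hG : Module.Injective R G)
    (hind : ∀ A B : Submodule R G, IsCompl A B → A = ⊥ ∨ B = ⊥)
    (A B : Submodule R G) (hA : A ≠ ⊥) (hB : B ≠ ⊥) : A ⊓ B ≠ ⊥ := by
  intro hAB
  -- maximal `C ⊇ A` with `C ⊓ B = ⊥`
  obtain ⟨C, ⟨hAC, hCB⟩, hCmax⟩ := exists_maximal_disjoint_s19 A B hAB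
  -- maximal `D ⊇ B` with `D ⊓ C = ⊥`
  obtain ⟨D, ⟨hBD, hDC⟩, hDmax⟩ := exists_maximal_disjoint_s19 B C (by
    rw [inf_comm] at hCB; exact hCB)
  set π : G →ₗ[R] G ⧸ D := D.mkQ with hπ
  have hπsurj : Function.Surjective π := Submodule.mkQ_surjective D
  have hι : Function.Injective (π.comp C.subtype) := by
    intro x y hxy
    have : ((x : G) - y) ∈ D := by
      simp only [LinearMap.comp_apply, hπ, Submodule.coe_subtype, Submodule.mkQ_apply] at hxy
      exact (Submodule.Quotient.eq D).mp hxy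
    have hxc : ((x : G) - y) ∈ C := sub_mem x.2 y.2
    have : ((x : G) - y) ∈ D ⊓ C := ⟨this, hxc⟩
    rw [hDC] at this
    exact Subtype.ext (by simpa [sub_eq_zero] using this)
  obtain ⟨τ, hτ⟩ := hG.out (π.comp C.subtype) hι C.subtype
  -- key essentiality consequence: submodules of `G ⧸ D` pull back to things meeting `C`
  have key : ∀ V : Submodule R (G ⧸ D), V ≠ ⊥ → ∃ y : G, y ∈ C ∧ y ≠ 0 ∧ π y ∈ V := by
    intro V hV
    set W : Submodule R G := V.comap π with hW
    have hDW : D ≤ W := fun d hd => by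
      simp only [hW, Submodule.mem_comap, hπ, Submodule.mkQ_apply]
      rw [Submodule.Quotient.mk_eq_zero D |>.mpr hd]
      exact V.zero_mem
    have hWC : W ⊓ C ≠ ⊥ := by
      intro hbot
      have hWD : W ≤ D := hDmax ⟨hBD.trans hDW, hbot⟩ hDW
      apply hV
      have : V = W.map π := (Submodule.map_comap_eq_of_surjective hπsurj V).symm
      rw [this, eq_bot_iff]
      rintro z ⟨w, hw, rfl⟩
      have : w ∈ D := hWD hw
      simpa [hπ, Submodule.Quotient.mk_eq_zero D |>.mpr this] using Submodule.zero_mem ⊥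
    obtain ⟨y, hy, hy0⟩ := Submodule.exists_mem_ne_zero_of_ne_bot hWC
    exact ⟨y, hy.2, hy0, hy.1⟩
  -- τ is injective
  have hτinj : Function.Injective τ := by
    rw [← LinearMap.ker_eq_bot]
    by_contra hker
    obtain ⟨y, hyC, hy0, hyk⟩ := key (LinearMap.ker τ) hker
    have : τ (π y) = y := hτ ⟨y, hyC⟩
    rw [LinearMap.mem_ker.mp hyk] at this
    exact hy0 this.symm
  set E : Submodule R G := LinearMap.range τ with hE
  have hCE : C ≤ E := fun c hc => ⟨π c, hτ ⟨c, hc⟩⟩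
  -- `E ⊓ B = ⊥`
  have hEB : E ⊓ B = ⊥ := by
    rw [eq_bot_iff]
    rintro x ⟨⟨w, rfl⟩, hxB⟩
    by_contra hx0
    have hx0' : τ w ≠ 0 := by simpa [Submodule.mem_bot] using hx0
    have hw0 : w ≠ 0 := fun h => hx0' (by rw [h, map_zero])
    set V : Submodule R (G ⧸ D) := (Submodule.span R {τ w}).comap τ with hV
    have hVne : V ≠ ⊥ := fun h => hw0 (by
      have : w ∈ V := Submodule.mem_comap.mpr (Submodule.mem_span_singleton_self _)
      rwa [h, Submodule.mem_bot] at this)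
    obtain ⟨y, hyC, hy0, hyV⟩ := key V hVne
    have h1 : τ (π y) = y := hτ ⟨y, hyC⟩
    have h2 : y ∈ Submodule.span R {τ w} := by
      have := Submodule.mem_comap.mp hyV; rwa [h1] at this
    have h3 : y ∈ B := (Submodule.span_singleton_le_iff_mem _ _ |>.mpr hxB) h2
    have : y ∈ C ⊓ B := ⟨hyC, h3⟩
    rw [hCB] at this
    exact hy0 this
  -- by maximality, `E = C`
  have hEC : E = C := le_antisymm (hCmax ⟨hAC.trans hCE, hEB⟩ hCE) hCE
  -- the retraction
  set p : G →ₗ[R] G := τ.comp π with hp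
  have hrange : LinearMap.range p = C := by
    rw [hp, LinearMap.range_comp, Submodule.range_mkQ, Submodule.map_top, ← hE, hEC]
  have hid : ∀ c : G, c ∈ C → p c = c := fun c hc => hτ ⟨c, hc⟩
  have hcompl : IsCompl C (LinearMap.ker p) := by
    constructor
    · rw [disjoint_iff, eq_bot_iff]
      rintro x ⟨hx1, hx2⟩
      have := hid x hx1
      rw [LinearMap.mem_ker.mp hx2] at this
      simp [← this]
    · rw [codisjoint_iff, eq_top_iff]
      intro x _
      have h1 : p x ∈ C := hrange ▸ LinearMap.mem_range_self p x
      have h2 : x - p x ∈ LinearMap.ker p := by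
        rw [LinearMap.mem_ker, map_sub, hid (p x) h1, sub_self]
      have : x = p x + (x - p x) := by abel
      rw [this]
      exact Submodule.add_mem_sup h1 h2
  rcases hind C (LinearMap.ker p) hcompl with hC0 | hker0
  · exact hA (le_bot_iff.mp (hC0 ▸ hAC))
  · -- then D = ⊥, so B = ⊥
    apply hB
    rw [eq_bot_iff]
    intro b hb
    have hbD : b ∈ D := hBD hb
    have : b ∈ LinearMap.ker p := by
      have hb0 : π b = 0 := by
        rw [hπ, Submodule.mkQ_apply, Submodule.Quotient.mk_eq_zero]; exact hbD
      rw [LinearMap.mem_ker, hp, LinearMap.comp_apply, hb0, map_zero]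
    rw [hker0] at this
    exact this

/-- An injective endomorphism of an indecomposable injective module is surjective. -/
lemma surjective_of_injective_endo (hG : Module.Injective R G) (hne : Nontrivial G)
    (hind : ∀ A B : Submodule R G, IsCompl A B → A = ⊥ ∨ B = ⊥)
    (f : G →ₗ[R] G) (hf : Function.Injective f) : Function.Surjective f := by
  set E : Submodule R G := LinearMap.range f with hE
  set e : G ≃ₗ[R] E := LinearEquiv.ofInjective f hf with he
  obtain ⟨h, hh⟩ := hG.out E.subtype (Submodule.injective_subtype E)
    (e.symm : E →ₗ[R] G)
  set q : G →ₗ[R] G := f.comp h with hq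
  have hfix : ∀ y : G, y ∈ E → q y = y := by
    intro y hy
    have h1 : h y = e.symm ⟨y, hy⟩ := hh ⟨y, hy⟩
    have h2 : ∀ x : G, ((e x : ↥E) : G) = f x := fun x => LinearEquiv.ofInjective_apply f x
    rw [hq, LinearMap.comp_apply, h1, ← h2, LinearEquiv.apply_symm_apply]
  have hrange : LinearMap.range q = E := by
    apply le_antisymm
    · rintro x ⟨w, rfl⟩
      exact ⟨h w, rfl⟩
    · intro y hy
      exact ⟨y, hfix y hy⟩
  have hcompl : IsCompl E (LinearMap.ker q) := by
    constructor
    · rw [disjoint_iff, eq_bot_iff]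
      rintro x ⟨hx1, hx2⟩
      have := hfix x hx1
      rw [LinearMap.mem_ker.mp hx2] at this
      simp [← this]
    · rw [codisjoint_iff, eq_top_iff]
      intro x _
      have h1 : q x ∈ E := hrange ▸ LinearMap.mem_range_self q x
      have h2 : x - q x ∈ LinearMap.ker q := by
        rw [LinearMap.mem_ker, map_sub, hfix (q x) h1, sub_self]
      have : x = q x + (x - q x) := by abel
      rw [this]
      exact Submodule.add_mem_sup h1 h2
  rcases hind E (LinearMap.ker q) hcompl with hE0 | hker0
  · exfalso
    obtain ⟨a, b, hab⟩ := hne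
    rcases ne_or_eq a 0 with ha | rfl
    · have : f a ∈ E := LinearMap.mem_range_self f a
      rw [hE0, Submodule.mem_bot] at this
      exact ha (hf (by rw [this, map_zero]))
    · have : f b ∈ E := LinearMap.mem_range_self f b
      rw [hE0, Submodule.mem_bot] at this
      exact hab (hf (by rw [this, map_zero])).symm
  · intro y
    refine ⟨h y, ?_⟩
    have h1 : q y ∈ E := hrange ▸ LinearMap.mem_range_self q y
    have h2 : q (q y - y) = 0 := by rw [map_sub, hfix (q y) h1, sub_self]
    have : q y - y ∈ LinearMap.ker q := LinearMap.mem_ker.mpr h2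
    rw [hker0, Submodule.mem_bot, sub_eq_zero] at this
    exact this

end Aux

/-- If `G` is a nonzero indecomposable injective module over a commutative
ring `R`, then there is a maximal ideal `P` of `R` such that every element of `R \\ P` acts
bijectively on `G`; in particular the module structure of `G` extends to `R_P`. -/
theorem exists_maximalIdeal_smul_bijective_of_indecomposable_injective (R : Type u)
    [CommRing R] (G : Type u) [AddCommGroup G] [Module R G]
    (hG : Module.Injective R G) (hne : Nontrivial G)
    (hind : ∀ A B : Submodule R G, IsCompl A B → A = ⊥ ∨ B = ⊥) :
    ∃ P : Ideal R, P.IsMaximal ∧ ∀ r ∉ P, Function.Bijective fun x : G => r • x := by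
  -- The set of scalars acting non-injectively is an ideal.
  have hker : ∀ r : R, ¬ Function.Injective (fun x : G => r • x) →
      LinearMap.ker (LinearMap.lsmul R G r) ≠ ⊥ := by
    intro r h hbot
    exact h (by
      have := LinearMap.ker_eq_bot.mp hbot
      intro x y hxy
      exact this (show LinearMap.lsmul R G r x = LinearMap.lsmul R G r y by simpa using hxy))
  set S : Ideal R :=
    { carrier := {r : R | ¬ Function.Injective (fun x : G => r • x)}
      zero_mem' := by
        intro h
        obtain ⟨a, b, hab⟩ := hne
        exact hab (h (show (0:R) • a = (0:R) • b by simp))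
      add_mem' := by
        intro a b ha hb
        have hKa := hker a ha
        have hKb := hker b hb
        have := uniform_of_indecomposable hG hind _ _ hKa hKb
        obtain ⟨z, hz, hz0⟩ := Submodule.exists_mem_ne_zero_of_ne_bot this
        intro hinj
        apply hz0
        have h1 : a • z = 0 := by simpa using hz.1
        have h2 : b • z = 0 := by simpa using hz.2
        exact hinj (show (a + b) • z = (a + b) • (0:G) by
          rw [add_smul, h1, h2, add_zero, smul_zero])
      smul_mem' := by
        intro c r hr hinj
        apply hr
        intro x y hxy
        exact hinj (show (c * r) • x = (c * r) • y by
          simp only [mul_smul]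
          exact congrArg (c • ·) hxy) } with hS
  have hSne : S ≠ ⊤ := by
    intro h
    have : (1:R) ∈ S := h ▸ Submodule.mem_top
    exact this (by intro x y hxy; simpa using hxy)
  obtain ⟨P, hPmax, hSP⟩ := Ideal.exists_le_maximal S hSne
  refine ⟨P, hPmax, fun r hr => ?_⟩
  have hrS : r ∉ S := fun h => hr (hSP h)
  have hinj : Function.Injective (fun x : G => r • x) := not_not.mp hrS
  have hinj' : Function.Injective (LinearMap.lsmul R G r) := by
    intro x y hxy; exact hinj (by simpa using hxy)
  have hsurj := surjective_of_injective_endo hG hne hind (LinearMap.lsmul R G r) hinj'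
  exact ⟨hinj, fun y => by obtain ⟨x, hx⟩ := hsurj y; exact ⟨x, by simpa using hx⟩⟩
end
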